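/- arXiv:1302.3709 — 4 statements merged into one kernel-verified Lean document; each statement's English description precedes it below -/
import Mathlib

section
/- Let B₁ = {(1/2)(1, i, i, −1)ᵀ, (1/2)(1, −i, −i, −1)ᵀ, (1/2)(1, −i, i, 1)ᵀ, (1/2)(1, i, −i, 1)ᵀ}, B₂ = {(1/2)(1, −i, −i, 1)ᵀ, (1/2)(1, −i, i, −1)ᵀ, (1/2)(1, i, −i, −1)ᵀ, (1/2)(1, i, i, 1)ᵀ}, and let B₃ = {e₁, e₂, e₃, e₄} be the standard basis of ℂ⁴. Then B₁, B₂, B₃ are pairwise mutually unbiased orthonormal bases of ℂ⁴, and the set {B₁, B₂, B₃} is strongly unextendible: there exists no unit vector ψ ∈ ℂ⁴ such that |⟨ψ, b⟩| = 1/2 for every b ∈ B₁ ∪ B₂ ∪ B₃. -/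
open Matrix

noncomputable section

/-- Matrices on the Hilbert space of `n` qubits, with rows and columns indexed by
bit strings `Fin n → Fin 2`. -/
abbrev QMat (n : ℕ) := Matrix (Fin n → Fin 2) (Fin n → Fin 2) ℂ

/-- The single-qubit identity. -/
def pI : Matrix (Fin 2) (Fin 2) ℂ := 1

/-- The single-qubit Pauli X. -/
def pX : Matrix (Fin 2) (Fin 2) ℂ := !![0, 1; 1, 0]

/-- The single-qubit Pauli Y. -/
def pY : Matrix (Fin 2) (Fin 2) ℂ := !![0, -Complex.I; Complex.I, 0]

/-- The single-qubit Pauli Z. -/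
def pZ : Matrix (Fin 2) (Fin 2) ℂ := !![1, 0; 0, -1]

/-- The `n`-fold Kronecker product `W 0 ⊗ ⋯ ⊗ W (n-1)`, realized on indices
`Fin n → Fin 2`. -/
def kron (n : ℕ) (W : Fin n → Matrix (Fin 2) (Fin 2) ℂ) : QMat n :=
  fun v w => ∏ j, W j (v j) (w j)

/-- `M` is an `n`-qubit Pauli operator: an `n`-fold Kronecker product of matrices
from `{I₂, X, Y, Z}`. -/
def IsPauliOp (n : ℕ) (M : QMat n) : Prop :=
  ∃ W : Fin n → Matrix (Fin 2) (Fin 2) ℂ,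
    (∀ j, W j = pI ∨ W j = pX ∨ W j = pY ∨ W j = pZ) ∧ M = kron n W

/-- Two matrices are equal up to phase if one is a nonzero scalar multiple of the other. -/
def PhaseEq {m : Type*} (A B : Matrix m m ℂ) : Prop := ∃ c : ℂ, c ≠ 0 ∧ A = c • B

/-- A maximal commuting Pauli class in dimension `d = 2 ^ n`: a set of `d - 1`
pairwise commuting non-identity `n`-qubit Pauli operators, pairwise distinct up to phase. -/
def IsMaxClass (n : ℕ) (C : Set (QMat n)) : Prop :=
  C.Finite ∧ C.ncard = 2 ^ n - 1 ∧
  (∀ U ∈ C, IsPauliOp n U ∧ U ≠ 1) ∧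
  (∀ U ∈ C, ∀ V ∈ C, U * V = V * U) ∧
  (∀ U ∈ C, ∀ V ∈ C, U ≠ V → ¬ PhaseEq U V)

/-- Two classes are disjoint if no member of one is equal up to phase to a member of the other. -/
def ClassDisjoint {n : ℕ} (C D : Set (QMat n)) : Prop :=
  ∀ U ∈ C, ∀ V ∈ D, ¬ PhaseEq U V

/-- Two classes are equal up to phase (as sets of operators). -/
def ClassPhaseEq {n : ℕ} (C D : Set (QMat n)) : Prop :=
  (∀ U ∈ C, ∃ V ∈ D, PhaseEq U V) ∧ (∀ V ∈ D, ∃ U ∈ C, PhaseEq U V)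

/-- The standard Hermitian inner product on `ι → ℂ` (conjugate-linear in the first slot). -/
def cinner {ι : Type*} [Fintype ι] (x y : ι → ℂ) : ℂ :=
  ∑ k, (starRingEnd ℂ) (x k) * y k

/-- The first basis `B₁`. -/
def B1 : Fin 4 → Fin 4 → ℂ :=
  ![(1 / 2 : ℂ) • ![1, Complex.I, Complex.I, -1],
    (1 / 2 : ℂ) • ![1, -Complex.I, -Complex.I, -1],
    (1 / 2 : ℂ) • ![1, -Complex.I, Complex.I, 1],
    (1 / 2 : ℂ) • ![1, Complex.I, -Complex.I, 1]]

/-- The second basis `B₂`. -/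
def B2 : Fin 4 → Fin 4 → ℂ :=
  ![(1 / 2 : ℂ) • ![1, -Complex.I, -Complex.I, 1],
    (1 / 2 : ℂ) • ![1, -Complex.I, Complex.I, -1],
    (1 / 2 : ℂ) • ![1, Complex.I, -Complex.I, -1],
    (1 / 2 : ℂ) • ![1, Complex.I, Complex.I, 1]]

/-- The standard basis `B₃` of `ℂ⁴`. -/
def B3 : Fin 4 → Fin 4 → ℂ := fun k j => if j = k then 1 else 0

lemma abs_eq_half' {z : ℂ} (h : Complex.normSq z = 1/4) : ‖z‖ = 1/2 := by
  rw [Complex.norm_def, h, show (1/4:ℝ) = (1/2)^2 by norm_num, Real.sqrt_sq (by norm_num)]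

lemma mul_conj_of_abs' {z : ℂ} (h : ‖z‖ = 1/2) :
    z * (starRingEnd ℂ) z = 1/4 := by
  rw [Complex.mul_conj]; norm_cast; rw [← Complex.sq_norm, h]; norm_num

set_option maxHeartbeats 4000000 in
/-- `B₁`, `B₂`, `B₃` are pairwise mutually unbiased orthonormal bases of `ℂ⁴`,
and the set `{B₁, B₂, B₃}` is strongly unextendible: no unit vector `ψ ∈ ℂ⁴` satisfies
`|⟨ψ, b⟩| = 1/2` for every vector `b` of the three bases. -/
theorem strongly_unextendible_triple_d4 :
    (∀ k l : Fin 4, cinner (B1 k) (B1 l) = if k = l then 1 else 0) ∧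
    (∀ k l : Fin 4, cinner (B2 k) (B2 l) = if k = l then 1 else 0) ∧
    (∀ k l : Fin 4, cinner (B3 k) (B3 l) = if k = l then 1 else 0) ∧
    (∀ k l : Fin 4, ‖cinner (B1 k) (B2 l)‖ = 1 / 2) ∧
    (∀ k l : Fin 4, ‖cinner (B1 k) (B3 l)‖ = 1 / 2) ∧
    (∀ k l : Fin 4, ‖cinner (B2 k) (B3 l)‖ = 1 / 2) ∧
    ¬ ∃ ψ : Fin 4 → ℂ, cinner ψ ψ = 1 ∧
        (∀ k, ‖cinner ψ (B1 k)‖ = 1 / 2) ∧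
        (∀ k, ‖cinner ψ (B2 k)‖ = 1 / 2) ∧
        (∀ k, ‖cinner ψ (B3 k)‖ = 1 / 2) := by
  refine ⟨?_, ?_, ?_, ?_, ?_, ?_, ?_⟩
  · intro k l
    fin_cases k <;> fin_cases l <;>
      simp [cinner, B1, Fin.sum_univ_four, Complex.ext_iff] <;> norm_num
  · intro k l
    fin_cases k <;> fin_cases l <;>
      simp [cinner, B2, Fin.sum_univ_four, Complex.ext_iff] <;> norm_num
  · intro k l
    fin_cases k <;> fin_cases l <;>
      simp [cinner, B3, Fin.sum_univ_four, Complex.ext_iff] <;> norm_num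
  · intro k l
    fin_cases k <;> fin_cases l <;>
      (apply abs_eq_half'; simp [cinner, B1, B2, Fin.sum_univ_four, Complex.normSq_apply]; norm_num)
  · intro k l
    fin_cases k <;> fin_cases l <;>
      (apply abs_eq_half'; simp [cinner, B1, B3, Fin.sum_univ_four, Complex.normSq_apply]; norm_num)
  · intro k l
    fin_cases k <;> fin_cases l <;>
      (apply abs_eq_half'; simp [cinner, B2, B3, Fin.sum_univ_four, Complex.normSq_apply]; norm_num)
  · rintro ⟨ψ, -, h1, h2, h3⟩
    have hn : ∀ k : Fin 4, ψ k * (starRingEnd ℂ) (ψ k) = 1/4 := by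
      intro k
      have hc : cinner ψ (B3 k) = (starRingEnd ℂ) (ψ k) := by
        fin_cases k <;> simp [cinner, B3, Fin.sum_univ_four]
      have h := h3 k
      rw [hc, Complex.norm_conj] at h
      exact mul_conj_of_abs' h
    have e10 := mul_conj_of_abs' (h1 0)
    have e11 := mul_conj_of_abs' (h1 1)
    have e12 := mul_conj_of_abs' (h1 2)
    have e13 := mul_conj_of_abs' (h1 3)
    have e20 := mul_conj_of_abs' (h2 0)
    have e21 := mul_conj_of_abs' (h2 1)
    have e22 := mul_conj_of_abs' (h2 2)
    have e23 := mul_conj_of_abs' (h2 3)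
    simp only [cinner, B1, B2, Fin.sum_univ_four, map_add, _root_.map_mul, Complex.conj_conj,
      Pi.smul_apply, smul_eq_mul, Matrix.cons_val_zero, Matrix.cons_val_one, Matrix.head_cons,
      Matrix.cons_val_two, Matrix.tail_cons, Matrix.cons_val_three, _root_.map_one, map_neg,
      Complex.conj_I, map_ofNat, map_div₀] at e10 e11 e12 e13 e20 e21 e22 e23
    set a0 := ψ 0; set a1 := ψ 1; set a2 := ψ 2; set a3 := ψ 3
    set b0 := (starRingEnd ℂ) (ψ 0); set b1 := (starRingEnd ℂ) (ψ 1)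
    set b2 := (starRingEnd ℂ) (ψ 2); set b3 := (starRingEnd ℂ) (ψ 3)
    have hn0 := hn 0; have hn1 := hn 1; have hn3 := hn 3
    have hT1 : Complex.I * (b1 * a0 - b0 * a1) = 0 := by
      linear_combination (1/2 : ℂ) * (e10 + e13 + e22 + e23 - e11 - e12 - e20 - e21)
    have hT3 : b3 * a0 + b0 * a3 = 0 := by
      linear_combination (1/2 : ℂ) * (e12 + e13 + e20 + e23 - e10 - e11 - e21 - e22)
    have hT13 : Complex.I * (b1 * a3 - b3 * a1) = 0 := by
      linear_combination (1/2 : ℂ) * (e11 + e13 + e21 + e23 - e10 - e12 - e20 - e22)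
    have hA : b1 * a0 = b0 * a1 :=
      sub_eq_zero.mp ((mul_eq_zero.mp hT1).resolve_left Complex.I_ne_zero)
    have hC : b1 * a3 = b3 * a1 :=
      sub_eq_zero.mp ((mul_eq_zero.mp hT13).resolve_left Complex.I_ne_zero)
    have hz : b0 * a1 = 0 := by
      linear_combination 2*a1*b3*hT3 + 2*b3*a0*hC - 2*a3*b3*hA - 4*b0*a1*hn3
    have hcontra : (1 : ℂ)/16 = 0 := by
      linear_combination a0*b1*hz - a1*b1*hn0 - (1/4 : ℂ)*hn1
    norm_num at hcontra
end
end

section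
/- Let {C₁, C₂, C₃} be an unextendible family of three pairwise disjoint maximal commuting Pauli classes in dimension d = 4. Then the nine operators of C₁ ∪ C₂ ∪ C₃ can be partitioned into three pairwise disjoint maximal commuting Pauli classes C₁′, C₂′, C₃′, each of which contains, up to phase, exactly one member from each of C₁, C₂, and C₃. -/
open Matrix

noncomputable section

/-! ### Auxiliary development: labels for Pauli operators -/

/-- The four single-qubit Pauli matrices, indexed by letters `0 = I`, `1 = X`, `2 = Y`, `3 = Z`. -/
def pauliOf : Fin 4 → Matrix (Fin 2) (Fin 2) ℂ := ![pI, pX, pY, pZ]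

/-- Product of Pauli letters (Klein four-group). -/
def lmul : Fin 4 → Fin 4 → Fin 4 := ![![0,1,2,3],![1,0,3,2],![2,3,0,1],![3,2,1,0]]

/-- Phase arising in the product of two Pauli letters. -/
def ph : Fin 4 → Fin 4 → ℂ :=
  ![![1,1,1,1],![1,1,Complex.I,-Complex.I],![1,-Complex.I,1,Complex.I],![1,Complex.I,-Complex.I,1]]

/-- Whether two Pauli letters anticommute. -/
def acm : Fin 4 → Fin 4 → Bool := fun x y => decide (x ≠ 0 ∧ y ≠ 0 ∧ x ≠ y)

lemma mulP (x y : Fin 4) : pauliOf x * pauliOf y = ph x y • pauliOf (lmul x y) := by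
  fin_cases x <;> fin_cases y <;>
    simp [pauliOf, pI, pX, pY, pZ, lmul, ph, Matrix.mul_fin_two, Matrix.one_fin_two,
      Matrix.smul_of, Matrix.smul_cons, Matrix.smul_empty, smul_eq_mul, Matrix.vecHead,
      Matrix.vecTail]

lemma ph_ne (x y : Fin 4) : ph x y ≠ 0 := by
  fin_cases x <;> fin_cases y <;>
    simp [ph, Matrix.vecHead, Matrix.vecTail, Complex.I_ne_zero]

lemma ph_flip (x y : Fin 4) : ph y x = (if acm x y then -1 else 1) * ph x y := by
  fin_cases x <;> fin_cases y <;>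
    norm_num [ph, acm, Matrix.vecHead, Matrix.vecTail, Fin.ext_iff]

lemma ph_self (x : Fin 4) : ph x x = 1 := by
  fin_cases x <;> norm_num [ph, Matrix.vecHead, Matrix.vecTail]

lemma trP0 (x : Fin 4) (hx : x ≠ 0) : (pauliOf x).trace = 0 := by
  fin_cases x
  · exact absurd rfl hx
  all_goals norm_num [pauliOf, pX, pY, pZ, Matrix.vecHead, Matrix.vecTail, Matrix.trace_fin_two]

lemma pauliOf_zero : pauliOf 0 = 1 := rfl

lemma pauliOf_cases (x : Fin 4) :
    pauliOf x = pI ∨ pauliOf x = pX ∨ pauliOf x = pY ∨ pauliOf x = pZ := by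
  fin_cases x <;> simp [pauliOf]

lemma letter_of_pauli {W : Matrix (Fin 2) (Fin 2) ℂ}
    (h : W = pI ∨ W = pX ∨ W = pY ∨ W = pZ) : ∃ x : Fin 4, W = pauliOf x := by
  rcases h with h | h | h | h
  exacts [⟨0, h⟩, ⟨1, h⟩, ⟨2, h⟩, ⟨3, h⟩]

/-! ### Kronecker product lemmas -/

lemma kron_mul {n : ℕ} (W W' : Fin n → Matrix (Fin 2) (Fin 2) ℂ) :
    kron n W * kron n W' = kron n (fun j => W j * W' j) := by
  funext v w
  simp only [kron, Matrix.mul_apply, ← Finset.prod_mul_distrib]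
  rw [Finset.prod_univ_sum]
  simp [Fintype.piFinset_univ]

lemma kron_smul {n : ℕ} (c : Fin n → ℂ) (M : Fin n → Matrix (Fin 2) (Fin 2) ℂ) :
    kron n (fun j => c j • M j) = (∏ j, c j) • kron n M := by
  funext v w
  simp [kron, Finset.prod_mul_distrib, Matrix.smul_apply, smul_eq_mul]

lemma kron_one {n : ℕ} : kron n (fun _ => (1 : Matrix (Fin 2) (Fin 2) ℂ)) = 1 := by
  funext v w
  simp only [kron, Matrix.one_apply]
  by_cases h : v = w
  · subst h; simp
  · rw [if_neg h]
    obtain ⟨j, hj⟩ := Function.ne_iff.mp h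
    exact Finset.prod_eq_zero (Finset.mem_univ j) (by simp [hj])

lemma trace_kron {n : ℕ} (W : Fin n → Matrix (Fin 2) (Fin 2) ℂ) :
    (kron n W).trace = ∏ j, (W j).trace := by
  simp only [Matrix.trace, Matrix.diag, kron]
  rw [Finset.prod_univ_sum]
  simp [Fintype.piFinset_univ, Matrix.trace, Matrix.diag]

/-! ### Labels for two-qubit Pauli operators -/

abbrev Lbl := Fin 2 → Fin 4

def PM (a : Lbl) : QMat 2 := kron 2 fun j => pauliOf (a j)

def lmulL (a b : Lbl) : Lbl := fun j => lmul (a j) (b j)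

def LComm (a b : Lbl) : Prop := acm (a 0) (b 0) = acm (a 1) (b 1)

instance (a b : Lbl) : Decidable (LComm a b) := by unfold LComm; infer_instance

lemma PM_mul (a b : Lbl) :
    PM a * PM b = (ph (a 0) (b 0) * ph (a 1) (b 1)) • PM (lmulL a b) := by
  rw [PM, PM, kron_mul]
  have : (fun j => pauliOf (a j) * pauliOf (b j))
      = fun j => ph (a j) (b j) • pauliOf (lmulL a b j) := by
    funext j; rw [mulP]; rfl
  rw [this, kron_smul, Fin.prod_univ_two]
  rfl

lemma PM_zero : PM 0 = 1 := by
  rw [PM]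
  have : (fun j : Fin 2 => pauliOf ((0 : Lbl) j)) = fun _ => (1 : Matrix (Fin 2) (Fin 2) ℂ) := by
    funext j; simp [pauliOf_zero]
  rw [this, kron_one]

lemma lmulL_self (a : Lbl) : lmulL a a = 0 := by
  funext j; have : ∀ x : Fin 4, lmul x x = 0 := by decide
  simp [lmulL, this]

lemma lmulL_comm (a b : Lbl) : lmulL a b = lmulL b a := by
  funext j; have : ∀ x y : Fin 4, lmul x y = lmul y x := by decide
  simp [lmulL, this]

lemma PM_sq (a : Lbl) : PM a * PM a = 1 := by
  rw [PM_mul, ph_self, ph_self, lmulL_self, PM_zero, one_mul, one_smul]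

lemma trace_PM0 {a : Lbl} (ha : a ≠ 0) : (PM a).trace = 0 := by
  rw [PM, trace_kron]
  obtain ⟨j, hj⟩ := Function.ne_iff.mp ha
  exact Finset.prod_eq_zero (Finset.mem_univ j) (trP0 _ (by simpa using hj))

lemma trace_one_qmat : (1 : QMat 2).trace = 4 := by
  rw [Matrix.trace_one]
  norm_num [Fintype.card_fun]

lemma PM_ne_zero (a : Lbl) : PM a ≠ 0 := by
  intro h
  have h2 := PM_sq a
  rw [h, mul_zero] at h2
  have := congrFun (congrFun h2 (fun _ => 0)) (fun _ => 0)
  simp [Matrix.one_apply] at this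

lemma lmulL_eq_zero {a b : Lbl} (h : a ≠ b) : lmulL a b ≠ 0 := by
  obtain ⟨j, hj⟩ := Function.ne_iff.mp h
  have hx : ∀ x y : Fin 4, x ≠ y → lmul x y ≠ 0 := by decide
  exact Function.ne_iff.mpr ⟨j, by simpa [lmulL] using hx _ _ hj⟩

lemma phaseEq_PM_iff {a b : Lbl} : PhaseEq (PM a) (PM b) ↔ a = b := by
  constructor
  · rintro ⟨c, hc, h⟩
    by_contra hne
    have h1 : PM a * PM b = c • (1 : QMat 2) := by
      rw [h, Matrix.smul_mul, PM_sq]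
    rw [PM_mul] at h1
    have h2 := congrArg Matrix.trace h1
    rw [Matrix.trace_smul, Matrix.trace_smul, trace_PM0 (lmulL_eq_zero hne),
      trace_one_qmat, smul_zero] at h2
    have : c = 0 := by
      have h4 : c * 4 = 0 := by simpa [smul_eq_mul] using h2.symm
      simpa using (mul_eq_zero.mp h4).resolve_right (by norm_num)
    exact hc this
  · rintro rfl; exact ⟨1, one_ne_zero, (one_smul _ _).symm⟩

lemma PM_inj {a b : Lbl} (h : PM a = PM b) : a = b :=
  phaseEq_PM_iff.mp ⟨1, one_ne_zero, by rw [h, one_smul]⟩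

lemma comm_iff {a b : Lbl} : PM a * PM b = PM b * PM a ↔ LComm a b := by
  rw [PM_mul, PM_mul, lmulL_comm b a]
  have hQ : ph (a 0) (b 0) * ph (a 1) (b 1) ≠ 0 := mul_ne_zero (ph_ne _ _) (ph_ne _ _)
  rw [ph_flip (a 0) (b 0), ph_flip (a 1) (b 1)]
  constructor
  · intro h
    have h2 : (ph (a 0) (b 0) * ph (a 1) (b 1)
        - (if acm (a 0) (b 0) then -1 else 1) * ph (a 0) (b 0) *
          ((if acm (a 1) (b 1) then -1 else 1) * ph (a 1) (b 1))) • PM (lmulL a b) = 0 := by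
      rw [sub_smul, h, sub_self]
    have h3 := (smul_eq_zero.mp h2).resolve_right (PM_ne_zero _)
    have h4 : ph (a 0) (b 0) * ph (a 1) (b 1)
        = (if acm (a 0) (b 0) then -1 else 1) * ph (a 0) (b 0) *
          ((if acm (a 1) (b 1) then -1 else 1) * ph (a 1) (b 1)) := by
      linear_combination h3
    unfold LComm
    rcases Bool.eq_false_or_eq_true (acm (a 0) (b 0)) with h0 | h0 <;>
      rcases Bool.eq_false_or_eq_true (acm (a 1) (b 1)) with h1 | h1 <;>
        rw [h0, h1] <;> rw [h0, h1] at h4 <;> simp at h4 ⊢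
    · exact absurd (by linear_combination h4 / 2) hQ
    · exact absurd (by linear_combination h4 / 2) hQ
  · intro h
    unfold LComm at h
    rcases Bool.eq_false_or_eq_true (acm (a 0) (b 0)) with h0 | h0 <;>
      rw [h0] at h <;> rw [h0, ← h] <;> simp

/-! ### Combinatorics of isotropic lines -/

abbrev T := Lbl × Lbl × Lbl

def mem3 (x : Lbl) (t : T) : Prop := x = t.1 ∨ x = t.2.1 ∨ x = t.2.2

def meets (t s : T) : Prop := mem3 t.1 s ∨ mem3 t.2.1 s ∨ mem3 t.2.2 s

def same3 (t s : T) : Prop :=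
  mem3 t.1 s ∧ mem3 t.2.1 s ∧ mem3 t.2.2 s ∧ mem3 s.1 t ∧ mem3 s.2.1 t ∧ mem3 s.2.2 t

def goodLine (t : T) : Prop :=
  t.1 ≠ 0 ∧ t.2.1 ≠ 0 ∧ t.2.2 ≠ 0 ∧ t.1 ≠ t.2.1 ∧ t.1 ≠ t.2.2 ∧ t.2.1 ≠ t.2.2 ∧
  LComm t.1 t.2.1 ∧ LComm t.1 t.2.2 ∧ LComm t.2.1 t.2.2

def ex1 (m t : T) : Prop :=
  (mem3 m.1 t ∧ ¬ mem3 m.2.1 t ∧ ¬ mem3 m.2.2 t) ∨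
  (¬ mem3 m.1 t ∧ mem3 m.2.1 t ∧ ¬ mem3 m.2.2 t) ∨
  (¬ mem3 m.1 t ∧ ¬ mem3 m.2.1 t ∧ mem3 m.2.2 t)

def covers (m₁ m₂ m₃ : T) (p : Lbl) : Prop := mem3 p m₁ ∨ mem3 p m₂ ∨ mem3 p m₃

instance (x : Lbl) (t : T) : Decidable (mem3 x t) := by unfold mem3; infer_instance
instance (t s : T) : Decidable (meets t s) := by unfold meets; infer_instance
instance (t s : T) : Decidable (same3 t s) := by unfold same3; infer_instance
instance (t : T) : Decidable (goodLine t) := by unfold goodLine; infer_instance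
instance (m t : T) : Decidable (ex1 m t) := by unfold ex1; infer_instance
instance (m₁ m₂ m₃ : T) (p : Lbl) : Decidable (covers m₁ m₂ m₃ p) := by
  unfold covers; infer_instance

/-- The 15 isotropic lines of the two-qubit Pauli geometry. -/
def line : Fin 15 → T := ![
  (![0,1], ![1,0], ![1,1]),
  (![0,1], ![2,0], ![2,1]),
  (![0,1], ![3,0], ![3,1]),
  (![0,2], ![1,0], ![1,2]),
  (![0,2], ![2,0], ![2,2]),
  (![0,2], ![3,0], ![3,2]),
  (![0,3], ![1,0], ![1,3]),
  (![0,3], ![2,0], ![2,3]),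
  (![0,3], ![3,0], ![3,3]),
  (![1,1], ![2,2], ![3,3]),
  (![1,1], ![2,3], ![3,2]),
  (![1,2], ![2,1], ![3,3]),
  (![1,2], ![2,3], ![3,1]),
  (![1,3], ![2,1], ![3,2]),
  (![1,3], ![2,2], ![3,1])]

set_option maxRecDepth 100000 in
lemma lines_good : ∀ i : Fin 15, goodLine (line i) := by decide

set_option maxRecDepth 100000 in
lemma lines_complete : ∀ a b : Lbl, (a ≠ 0 ∧ b ≠ 0 ∧ a ≠ b ∧ LComm a b) →
    ∃ i : Fin 15, same3 (line i) (a, b, lmulL a b) := by decide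

set_option maxRecDepth 100000 in
lemma line_good : ∀ a b : Lbl, (a ≠ 0 ∧ b ≠ 0 ∧ a ≠ b ∧ LComm a b) →
    goodLine (a, b, lmulL a b) := by decide

set_option maxRecDepth 100000 in
lemma lab_closure : ∀ a b c : Lbl,
    (a ≠ 0 ∧ b ≠ 0 ∧ c ≠ 0 ∧ a ≠ b ∧ a ≠ c ∧ b ≠ c ∧ LComm a b ∧ LComm a c ∧ LComm b c) →
    c = lmulL a b := by decide

set_option maxRecDepth 100000 in
set_option synthInstance.maxSize 100000 in
set_option synthInstance.maxHeartbeats 400000 in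
lemma keyCombin : ∀ i₁ i₂ i₃ : Fin 15,
    (¬ meets (line i₁) (line i₂) ∧ ¬ meets (line i₁) (line i₃) ∧
      ¬ meets (line i₂) (line i₃)) →
    (∀ i : Fin 15, meets (line i) (line i₁) ∨ meets (line i) (line i₂) ∨
      meets (line i) (line i₃)) →
    ∃ j₁ : Fin 15, (ex1 (line j₁) (line i₁) ∧ ex1 (line j₁) (line i₂) ∧
      ex1 (line j₁) (line i₃)) ∧
    ∃ j₂ : Fin 15, (¬ meets (line j₁) (line j₂) ∧
      ex1 (line j₂) (line i₁) ∧ ex1 (line j₂) (line i₂) ∧ ex1 (line j₂) (line i₃)) ∧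
    ∃ j₃ : Fin 15, (¬ meets (line j₁) (line j₃) ∧ ¬ meets (line j₂) (line j₃) ∧
      ex1 (line j₃) (line i₁) ∧ ex1 (line j₃) (line i₂) ∧ ex1 (line j₃) (line i₃)) ∧
    ∀ p : Lbl, covers (line j₁) (line j₂) (line j₃) p ↔
      covers (line i₁) (line i₂) (line i₃) p := by decide

/-! ### Bridging lemmas -/

/-- The class of operators associated with a label triple. -/
def Cm (t : T) : Set (QMat 2) := {PM t.1, PM t.2.1, PM t.2.2}

lemma mem_Cm {U : QMat 2} {t : T} : U ∈ Cm t ↔ ∃ p, mem3 p t ∧ U = PM p := by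
  constructor
  · rintro (h | h | h)
    exacts [⟨t.1, Or.inl rfl, h⟩, ⟨t.2.1, Or.inr (Or.inl rfl), h⟩,
      ⟨t.2.2, Or.inr (Or.inr rfl), h⟩]
  · rintro ⟨p, (rfl | rfl | rfl), rfl⟩
    exacts [Or.inl rfl, Or.inr (Or.inl rfl), Or.inr (Or.inr rfl)]

lemma same3_mem {t s : T} (h : same3 t s) : ∀ x, mem3 x t ↔ mem3 x s := by
  obtain ⟨h1, h2, h3, h4, h5, h6⟩ := h
  intro x
  constructor
  · rintro (rfl | rfl | rfl) <;> assumption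
  · rintro (rfl | rfl | rfl) <;> assumption

lemma meets_iff {t s : T} : meets t s ↔ ∃ x, mem3 x t ∧ mem3 x s := by
  constructor
  · rintro (h | h | h)
    exacts [⟨t.1, Or.inl rfl, h⟩, ⟨t.2.1, Or.inr (Or.inl rfl), h⟩,
      ⟨t.2.2, Or.inr (Or.inr rfl), h⟩]
  · rintro ⟨x, (rfl | rfl | rfl), hx⟩
    exacts [Or.inl hx, Or.inr (Or.inl hx), Or.inr (Or.inr hx)]

lemma acm_comm : ∀ x y : Fin 4, acm x y = acm y x := by decide

lemma LComm_symm {a b : Lbl} (h : LComm a b) : LComm b a := by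
  unfold LComm at h ⊢
  rw [acm_comm (b 0) (a 0), acm_comm (b 1) (a 1)]
  exact h

lemma maxclass_of_line {t : T} (hg : goodLine t) : IsMaxClass 2 (Cm t) := by
  obtain ⟨h1, h2, h3, h4, h5, h6, h7, h8, h9⟩ := hg
  refine ⟨(Set.finite_singleton _).insert _ |>.insert _, ?_, ?_, ?_, ?_⟩
  · rw [show (2:ℕ)^2 - 1 = 3 from by norm_num]
    exact Set.ncard_eq_three.mpr ⟨_, _, _, fun h => h4 (PM_inj h), fun h => h5 (PM_inj h),
      fun h => h6 (PM_inj h), rfl⟩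
  · intro U hU
    obtain ⟨p, hp, rfl⟩ := mem_Cm.mp hU
    have hp0 : p ≠ 0 := by rcases hp with rfl | rfl | rfl <;> assumption
    refine ⟨⟨fun j => pauliOf (p j), fun j => pauliOf_cases (p j), rfl⟩, ?_⟩
    intro h1'
    exact hp0 (PM_inj (h1'.trans PM_zero.symm))
  · intro U hU V hV
    obtain ⟨p, hp, rfl⟩ := mem_Cm.mp hU
    obtain ⟨q, hq, rfl⟩ := mem_Cm.mp hV
    rcases hp with rfl | rfl | rfl <;> rcases hq with rfl | rfl | rfl <;>
      first
        | rfl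
        | exact comm_iff.mpr (by assumption)
        | exact comm_iff.mpr (LComm_symm (by assumption))
  · intro U hU V hV hne hPE
    obtain ⟨p, hp, rfl⟩ := mem_Cm.mp hU
    obtain ⟨q, hq, rfl⟩ := mem_Cm.mp hV
    exact hne (congrArg PM (phaseEq_PM_iff.mp hPE))

lemma class_structure {Cl : Set (QMat 2)} (h : IsMaxClass 2 Cl) :
    ∃ a b : Lbl, (a ≠ 0 ∧ b ≠ 0 ∧ a ≠ b ∧ LComm a b) ∧ Cl = Cm (a, b, lmulL a b) := by
  obtain ⟨hfin, hcard, hmem, hcomm, hph⟩ := h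
  have h3 : Cl.ncard = 3 := by norm_num at hcard; exact hcard
  obtain ⟨U, V, W, hUV, hUW, hVW, hC⟩ := Set.ncard_eq_three.mp h3
  have hU : U ∈ Cl := by rw [hC]; exact Set.mem_insert _ _
  have hV : V ∈ Cl := by rw [hC]; exact Set.mem_insert_of_mem _ (Set.mem_insert _ _)
  have hW : W ∈ Cl := by rw [hC]; exact Set.mem_insert_of_mem _ (Set.mem_insert_of_mem _ rfl)
  have getlab : ∀ {M}, M ∈ Cl → ∃ a : Lbl, M = PM a := by
    intro M hM
    obtain ⟨Wf, hWf, rfl⟩ := (hmem M hM).1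
    have hWe : Wf = fun j => pauliOf (Classical.choose (letter_of_pauli (hWf j))) :=
      funext fun j => Classical.choose_spec (letter_of_pauli (hWf j))
    exact ⟨fun j => Classical.choose (letter_of_pauli (hWf j)), by rw [PM, ← hWe]⟩
  obtain ⟨a, rfl⟩ := getlab hU
  obtain ⟨b, rfl⟩ := getlab hV
  obtain ⟨c, rfl⟩ := getlab hW
  have hane : a ≠ 0 := fun h => (hmem _ hU).2 (by rw [h, PM_zero])
  have hbne : b ≠ 0 := fun h => (hmem _ hV).2 (by rw [h, PM_zero])
  have hcne : c ≠ 0 := fun h => (hmem _ hW).2 (by rw [h, PM_zero])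
  have hab : a ≠ b := fun h => hUV (congrArg PM h)
  have hac : a ≠ c := fun h => hUW (congrArg PM h)
  have hbc : b ≠ c := fun h => hVW (congrArg PM h)
  have hLab : LComm a b := comm_iff.mp (hcomm _ hU _ hV)
  have hLac : LComm a c := comm_iff.mp (hcomm _ hU _ hW)
  have hLbc : LComm b c := comm_iff.mp (hcomm _ hV _ hW)
  have hc : c = lmulL a b :=
    lab_closure a b c ⟨hane, hbne, hcne, hab, hac, hbc, hLab, hLac, hLbc⟩
  refine ⟨a, b, ⟨hane, hbne, hab, hLab⟩, ?_⟩
  rw [hC, hc]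
  rfl

/-- The nine operators of an unextendible family of three pairwise disjoint
maximal commuting Pauli classes in `d = 4` admit a second partition into three pairwise
disjoint maximal commuting Pauli classes, each containing (up to phase) exactly one member
from each of the original classes. -/
theorem repartition_unextendible_triple_d4 (C : Fin 3 → Set (QMat 2))
    (hmax : ∀ i, IsMaxClass 2 (C i))
    (hdisj : ∀ i j, i ≠ j → ClassDisjoint (C i) (C j))
    (hunext : ¬ ∃ R : Set (QMat 2), IsMaxClass 2 R ∧
        ∀ U ∈ R, ∀ V ∈ C 0 ∪ C 1 ∪ C 2, ¬ PhaseEq U V) :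
    ∃ C' : Fin 3 → Set (QMat 2),
      (∀ k, IsMaxClass 2 (C' k)) ∧
      (∀ k l, k ≠ l → ClassDisjoint (C' k) (C' l)) ∧
      (∀ U ∈ C 0 ∪ C 1 ∪ C 2, ∃! k : Fin 3, ∃ V ∈ C' k, PhaseEq U V) ∧
      (∀ k, ∀ V ∈ C' k, ∃ U ∈ C 0 ∪ C 1 ∪ C 2, PhaseEq U V) ∧
      (∀ k j : Fin 3, ∃! V, V ∈ C' k ∧ ∃ U ∈ C j, PhaseEq V U) := by
  classical
  have hstr : ∀ i : Fin 3, ∃ (s : T) (idx : Fin 15),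
      goodLine s ∧ same3 (line idx) s ∧ C i = Cm s := by
    intro i
    obtain ⟨a, b, hcond, hCi⟩ := class_structure (hmax i)
    obtain ⟨idx, hidx⟩ := lines_complete a b hcond
    exact ⟨(a, b, lmulL a b), idx,
      line_good a b hcond, hidx, hCi⟩
  choose s tl hgood hsame hCeq using hstr
  have hmemiff : ∀ i x, mem3 x (line (tl i)) ↔ mem3 x (s i) := fun i => same3_mem (hsame i)
  have hCmem : ∀ (i : Fin 3) (U), U ∈ C i ↔ ∃ p, mem3 p (s i) ∧ U = PM p := by
    intro i U; rw [hCeq i]; exact mem_Cm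
  have hnc : ∀ i j, i ≠ j → ∀ x, mem3 x (s i) → mem3 x (s j) → False := by
    intro i j hij x h1 h2
    exact hdisj i j hij (PM x) ((hCmem i _).mpr ⟨x, h1, rfl⟩) (PM x)
      ((hCmem j _).mpr ⟨x, h2, rfl⟩) (phaseEq_PM_iff.mpr rfl)
  have hnm : ∀ i j, i ≠ j → ¬ meets (line (tl i)) (line (tl j)) := by
    intro i j hij h
    obtain ⟨x, h1, h2⟩ := meets_iff.mp h
    exact hnc i j hij x ((hmemiff i x).mp h1) ((hmemiff j x).mp h2)
  have hful : ∀ i : Fin 15, meets (line i) (line (tl 0)) ∨ meets (line i) (line (tl 1)) ∨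
      meets (line i) (line (tl 2)) := by
    intro i
    by_contra hcon
    push_neg at hcon
    obtain ⟨hm0, hm1, hm2⟩ := hcon
    refine hunext ⟨Cm (line i), maxclass_of_line (lines_good i), ?_⟩
    intro U hU V hV hPE
    obtain ⟨p, hp, rfl⟩ := mem_Cm.mp hU
    have hVi : ∃ j : Fin 3, ∃ q, mem3 q (s j) ∧ V = PM q := by
      simp only [Set.mem_union] at hV
      rcases hV with (hV | hV) | hV
      exacts [⟨0, (hCmem 0 V).mp hV⟩, ⟨1, (hCmem 1 V).mp hV⟩, ⟨2, (hCmem 2 V).mp hV⟩]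
    obtain ⟨j, q, hq, rfl⟩ := hVi
    cases phaseEq_PM_iff.mp hPE
    have hmj : meets (line i) (line (tl j)) := meets_iff.mpr ⟨p, hp, (hmemiff j p).mpr hq⟩
    fin_cases j
    exacts [hm0 hmj, hm1 hmj, hm2 hmj]
  obtain ⟨j₁, ⟨e11, e12, e13⟩, j₂, ⟨nm12, e21, e22, e23⟩, j₃, ⟨nm13, nm23, e31, e32, e33⟩,
      hcov⟩ :=
    keyCombin (tl 0) (tl 1) (tl 2)
      ⟨hnm 0 1 (by decide), hnm 0 2 (by decide), hnm 1 2 (by decide)⟩ hful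
  set m : Fin 3 → T := ![line j₁, line j₂, line j₃] with hm
  have hmgood : ∀ k, goodLine (m k) := by
    intro k; fin_cases k
    exacts [lines_good j₁, lines_good j₂, lines_good j₃]
  have hmnc : ∀ k l, k ≠ l → ∀ x, mem3 x (m k) → mem3 x (m l) → False := by
    intro k l hkl x h1 h2
    fin_cases k <;> fin_cases l <;>
      first
        | exact absurd rfl hkl
        | exact nm12 (meets_iff.mpr ⟨x, h1, h2⟩)
        | exact nm12 (meets_iff.mpr ⟨x, h2, h1⟩)
        | exact nm13 (meets_iff.mpr ⟨x, h1, h2⟩)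
        | exact nm13 (meets_iff.mpr ⟨x, h2, h1⟩)
        | exact nm23 (meets_iff.mpr ⟨x, h1, h2⟩)
        | exact nm23 (meets_iff.mpr ⟨x, h2, h1⟩)
  have hcover : ∀ p (i : Fin 3), mem3 p (s i) → ∃ k, mem3 p (m k) := by
    intro p i hp
    have hc1 : covers (line (tl 0)) (line (tl 1)) (line (tl 2)) p := by
      fin_cases i
      exacts [Or.inl ((hmemiff 0 p).mpr hp), Or.inr (Or.inl ((hmemiff 1 p).mpr hp)),
        Or.inr (Or.inr ((hmemiff 2 p).mpr hp))]
    rcases (hcov p).mpr hc1 with h | h | h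
    exacts [⟨0, h⟩, ⟨1, h⟩, ⟨2, h⟩]
  have hcovrev : ∀ p (k : Fin 3), mem3 p (m k) → ∃ i : Fin 3, mem3 p (s i) := by
    intro p k hp
    have hc1 : covers (line j₁) (line j₂) (line j₃) p := by
      fin_cases k
      exacts [Or.inl hp, Or.inr (Or.inl hp), Or.inr (Or.inr hp)]
    rcases (hcov p).mp hc1 with h | h | h
    exacts [⟨0, (hmemiff 0 p).mp h⟩, ⟨1, (hmemiff 1 p).mp h⟩, ⟨2, (hmemiff 2 p).mp h⟩]
  have hex1 : ∀ k j : Fin 3, ex1 (m k) (line (tl j)) := by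
    intro k j
    fin_cases k <;> fin_cases j
    exacts [e11, e12, e13, e21, e22, e23, e31, e32, e33]
  refine ⟨fun k => Cm (m k), ?_, ?_, ?_, ?_, ?_⟩
  · intro k
    exact maxclass_of_line (hmgood k)
  · intro k l hkl U hU V hV hPE
    obtain ⟨p, hp, rfl⟩ := mem_Cm.mp hU
    obtain ⟨q, hq, rfl⟩ := mem_Cm.mp hV
    cases phaseEq_PM_iff.mp hPE
    exact hmnc k l hkl p hp hq
  · intro U hU
    have hUi : ∃ i : Fin 3, ∃ p, mem3 p (s i) ∧ U = PM p := by
      simp only [Set.mem_union] at hU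
      rcases hU with (hU | hU) | hU
      exacts [⟨0, (hCmem 0 U).mp hU⟩, ⟨1, (hCmem 1 U).mp hU⟩, ⟨2, (hCmem 2 U).mp hU⟩]
    obtain ⟨i, p, hp, rfl⟩ := hUi
    obtain ⟨k, hk⟩ := hcover p i hp
    refine ⟨k, ⟨PM p, mem_Cm.mpr ⟨p, hk, rfl⟩, phaseEq_PM_iff.mpr rfl⟩, ?_⟩
    intro k' hk'
    obtain ⟨V, hV, hPE⟩ := hk'
    obtain ⟨q, hq, rfl⟩ := mem_Cm.mp hV
    cases phaseEq_PM_iff.mp hPE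
    by_contra hne
    exact hmnc k' k hne p hq hk
  · intro k V hV
    obtain ⟨q, hq, rfl⟩ := mem_Cm.mp hV
    obtain ⟨i, hi⟩ := hcovrev q k hq
    have hUC : PM q ∈ C i := (hCmem i _).mpr ⟨q, hi, rfl⟩
    refine ⟨PM q, ?_, phaseEq_PM_iff.mpr rfl⟩
    simp only [Set.mem_union]
    fin_cases i
    exacts [Or.inl (Or.inl hUC), Or.inl (Or.inr hUC), Or.inr hUC]
  · intro k j
    have hx := hex1 k j
    have hiff := hmemiff j
    obtain ⟨-, -, -, hd1, hd2, hd3, -, -, -⟩ := hmgood k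
    have huniq : ∀ q₀, mem3 q₀ (m k) → mem3 q₀ (line (tl j)) →
        ∀ q', mem3 q' (m k) → (∃ U ∈ C j, PhaseEq (PM q') U) → PM q' = PM q₀ := by
      intro q₀ hq₀m hq₀t q' hq'm hq'U
      obtain ⟨U, hU, hPE⟩ := hq'U
      obtain ⟨p', hp', rfl⟩ := (hCmem j U).mp hU
      cases phaseEq_PM_iff.mp hPE
      have hq't : mem3 q' (line (tl j)) := (hiff q').mpr hp'
      rcases hx with ⟨g1, g2, g3⟩ | ⟨g1, g2, g3⟩ | ⟨g1, g2, g3⟩ <;>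
        rcases hq'm with rfl | rfl | rfl <;>
          rcases hq₀m with rfl | rfl | rfl <;>
            first
              | rfl
              | exact absurd hq't (by assumption)
              | exact absurd hq₀t (by assumption)
    have hexq : ∃ q₀, mem3 q₀ (m k) ∧ mem3 q₀ (line (tl j)) := by
      rcases hx with ⟨g1, g2, g3⟩ | ⟨g1, g2, g3⟩ | ⟨g1, g2, g3⟩
      exacts [⟨(m k).1, Or.inl rfl, g1⟩, ⟨(m k).2.1, Or.inr (Or.inl rfl), g2⟩,
        ⟨(m k).2.2, Or.inr (Or.inr rfl), g3⟩]
    obtain ⟨q₀, hq₀m, hq₀t⟩ := hexq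
    refine ⟨PM q₀, ⟨mem_Cm.mpr ⟨q₀, hq₀m, rfl⟩,
      PM q₀, (hCmem j _).mpr ⟨q₀, (hiff q₀).mp hq₀t, rfl⟩, phaseEq_PM_iff.mpr rfl⟩, ?_⟩
    rintro V ⟨hVm, hVU⟩
    obtain ⟨q', hq', rfl⟩ := mem_Cm.mp hVm
    exact huniq q₀ hq₀m hq₀t q' hq' hVU
end
end

section
/- Every maximal commuting Pauli class is closed under multiplication up to phase: if C is a maximal commuting Pauli class in dimension d = 2ⁿ and U, V ∈ C are not equal up to phase, then the product UV is equal up to phase to some member of C. -/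
open Matrix

noncomputable section

namespace MCP

/-! ### ZMod 2 / phase basics -/

def z2 : Fin 2 → ZMod 2 := fun i => (i.val : ZMod 2)
def f2 : ZMod 2 → Fin 2 := fun x => ⟨x.val, x.val_lt⟩

lemma z2_f2 (x : ZMod 2) : z2 (f2 x) = x := by revert x; decide
lemma f2_z2 (v : Fin 2) : f2 (z2 v) = v := by revert v; decide
lemma z2_inj : Function.Injective z2 := by decide

def χ : ZMod 2 → ℂ := fun x => (-1 : ℂ) ^ x.val

lemma zmod2_cases (x : ZMod 2) : x = 0 ∨ x = 1 := by revert x; decide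
lemma add_self (x : ZMod 2) : x + x = 0 := by revert x; decide

lemma two_eq_zero : (1 + 1 : ZMod 2) = 0 := rfl
lemma two_eq_zero' : (2 : ZMod 2) = 0 := rfl
lemma val2 : (2 : ZMod 2).val = 0 := rfl
lemma val0 : (0 : ZMod 2).val = 0 := rfl
lemma val1 : (1 : ZMod 2).val = 1 := rfl

lemma χ_zero : χ 0 = 1 := rfl
lemma χ_ne (x : ZMod 2) : χ x ≠ 0 := by
  rcases zmod2_cases x with h | h <;> subst h <;> norm_num [χ, val0, val1, val2, two_eq_zero']
lemma χ_add (x y : ZMod 2) : χ (x + y) = χ x * χ y := by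
  rcases zmod2_cases x with h | h <;> rcases zmod2_cases y with h' | h' <;>
    subst h <;> subst h' <;> norm_num [χ, val0, val1, val2, two_eq_zero, two_eq_zero']
lemma χ_inj (x y : ZMod 2) (h : χ x = χ y) : x = y := by
  rcases zmod2_cases x with hx | hx <;> rcases zmod2_cases y with hy | hy <;>
    subst hx <;> subst hy <;>
    first | rfl | (norm_num [χ, val0, val1, val2, two_eq_zero'] at h)

lemma χ_sum {ι : Type*} (s : Finset ι) (f : ι → ZMod 2) :
    χ (∑ j ∈ s, f j) = ∏ j ∈ s, χ (f j) := by
  classical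
  induction s using Finset.induction with
  | empty => simp [χ_zero]
  | @insert a s' ha ih => simp [Finset.sum_insert ha, Finset.prod_insert ha, χ_add, ih]

/-! ### labelled single-qubit Paulis -/

def Qe (a b : ZMod 2) : Matrix (Fin 2) (Fin 2) ℂ :=
  fun v w => (if z2 w = z2 v + a then 1 else 0) * χ (b * z2 w)

lemma Qe00 : Qe 0 0 = pI := by
  ext v w; fin_cases v <;> fin_cases w <;>
    norm_num [Qe, pI, z2, χ, val0, val1, Matrix.one_apply] <;> rfl
lemma Qe00' : Qe 0 0 = 1 := Qe00.trans rfl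
lemma Qe10 : Qe 1 0 = pX := by
  ext v w; fin_cases v <;> fin_cases w <;>
    norm_num [Qe, pX, z2, χ, val0, val1, val2, two_eq_zero, two_eq_zero']
lemma Qe01 : Qe 0 1 = pZ := by
  ext v w; fin_cases v <;> fin_cases w <;>
    norm_num [Qe, pZ, z2, χ, val0, val1, val2, two_eq_zero']
lemma Qe11 : pY = Complex.I • Qe 1 1 := by
  ext v w; fin_cases v <;> fin_cases w <;>
    norm_num [Qe, pY, z2, χ, val0, val1, val2, two_eq_zero, two_eq_zero']

lemma Qe_mul (a b a' b' : ZMod 2) :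
    Qe a b * Qe a' b' = χ (b * a') • Qe (a + a') (b + b') := by
  rcases zmod2_cases a with h|h <;> rcases zmod2_cases b with h2|h2 <;>
  rcases zmod2_cases a' with h3|h3 <;> rcases zmod2_cases b' with h4|h4 <;>
  subst h <;> subst h2 <;> subst h3 <;> subst h4 <;>
  · ext v w
    fin_cases v <;> fin_cases w <;>
      norm_num [Qe, z2, χ, val0, val1, val2, two_eq_zero, two_eq_zero',
        Matrix.mul_apply, Fin.sum_univ_two] <;>
      first
      | rfl | decide
      | (rw [if_pos (by decide)] <;> norm_num)
      | (rw [if_neg (by decide)] <;> norm_num)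
      | norm_num

/-! ### Kronecker products -/

lemma kron_mul (n : ℕ) (W W' : Fin n → Matrix (Fin 2) (Fin 2) ℂ) :
    kron n W * kron n W' = kron n (fun j => W j * W' j) := by
  ext v w
  simp only [kron, Matrix.mul_apply, Fin.isValue]
  rw [Finset.prod_univ_sum (fun _ => (Finset.univ : Finset (Fin 2)))
    (fun j i => W j (v j) i * W' j i (w j))]
  rw [Fintype.piFinset_univ]
  exact Finset.sum_congr rfl fun u _ => (Finset.prod_mul_distrib).symm

lemma kron_smul (n : ℕ) (c : Fin n → ℂ) (W : Fin n → Matrix (Fin 2) (Fin 2) ℂ) :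
    kron n (fun j => c j • W j) = (∏ j, c j) • kron n W := by
  ext v w
  simp [kron, Finset.prod_mul_distrib, Matrix.smul_apply, smul_eq_mul]

lemma kron_one (n : ℕ) : kron n (fun _ => (1 : Matrix (Fin 2) (Fin 2) ℂ)) = 1 := by
  ext v w
  simp only [kron, Matrix.one_apply]
  by_cases h : v = w
  · subst h; simp
  · rw [if_neg h]
    obtain ⟨j, hj⟩ : ∃ j, v j ≠ w j := by
      by_contra hc; push_neg at hc; exact h (funext hc)
    exact Finset.prod_eq_zero (Finset.mem_univ j) (by simp [Matrix.one_apply, hj])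

/-! ### labelled n-qubit Paulis -/

abbrev V (n : ℕ) := Fin n → ZMod 2
abbrev F (n : ℕ) := V n × V n

def PM (n : ℕ) (p : F n) : QMat n := kron n (fun j => Qe (p.1 j) (p.2 j))

lemma PM_apply (n : ℕ) (p : F n) (v w : Fin n → Fin 2) :
    PM n p v w =
      (if ∀ j, z2 (w j) = z2 (v j) + p.1 j then 1 else 0) * ∏ j, χ (p.2 j * z2 (w j)) := by
  simp only [PM, kron, Qe]
  rw [Finset.prod_mul_distrib]
  congr 1
  by_cases h : ∀ j, z2 (w j) = z2 (v j) + p.1 j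
  · rw [if_pos h]; exact Finset.prod_eq_one fun j _ => if_pos (h j)
  · rw [if_neg h]
    push_neg at h
    obtain ⟨j, hj⟩ := h
    exact Finset.prod_eq_zero (Finset.mem_univ j) (if_neg hj)

lemma PM_mul (n : ℕ) (p q : F n) :
    PM n p * PM n q = χ (∑ j, p.2 j * q.1 j) • PM n (p + q) := by
  rw [PM, PM, kron_mul]
  have : (fun j => Qe (p.1 j) (p.2 j) * Qe (q.1 j) (q.2 j))
      = fun j => χ (p.2 j * q.1 j) • Qe ((p+q).1 j) ((p+q).2 j) := by
    funext j; rw [Qe_mul]; rfl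
  rw [this, kron_smul, χ_sum, PM]

lemma PM_one (n : ℕ) : PM n 0 = 1 := by
  rw [PM]
  have : (fun j => Qe ((0 : F n).1 j) ((0 : F n).2 j))
      = fun _ : Fin n => (1 : Matrix (Fin 2) (Fin 2) ℂ) := by
    funext j
    simp only [Prod.fst_zero, Prod.snd_zero, Pi.zero_apply]
    exact Qe00'
  rw [this, kron_one]

lemma PM_entry_ne (n : ℕ) (p : F n) (v : Fin n → Fin 2) :
    PM n p v (fun j => f2 (z2 (v j) + p.1 j)) ≠ 0 := by
  rw [PM_apply]
  have hcond : ∀ j, z2 ((fun j => f2 (z2 (v j) + p.1 j)) j) = z2 (v j) + p.1 j :=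
    fun j => z2_f2 _
  rw [if_pos hcond, one_mul]
  exact Finset.prod_ne_zero_iff.2 fun j _ => χ_ne _

lemma PM_entry_zero (n : ℕ) (p : F n) (v w : Fin n → Fin 2)
    (hw : ∃ j, z2 (w j) ≠ z2 (v j) + p.1 j) : PM n p v w = 0 := by
  rw [PM_apply]
  obtain ⟨j, hj⟩ := hw
  rw [if_neg (fun hall => hj (hall j)), zero_mul]

lemma PM_inj (n : ℕ) (p q : F n) (c : ℂ) (hc : c ≠ 0)
    (h : PM n p = c • PM n q) : p = q := by
  have h1 : p.1 = q.1 := by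
    funext j
    by_contra hne
    have hz : PM n q (fun _ => f2 0) (fun k => f2 (z2 (f2 0) + p.1 k)) = 0 := by
      apply PM_entry_zero
      refine ⟨j, ?_⟩
      rw [z2_f2]
      intro hh
      exact hne (add_right_injective (z2 (f2 0)) hh)
    have hnz := PM_entry_ne n p (fun _ => f2 0)
    rw [h] at hnz
    simp only [Matrix.smul_apply, smul_eq_mul] at hnz
    rw [hz, mul_zero] at hnz
    exact hnz rfl
  have key : ∀ w : Fin n → Fin 2,
      (∏ j, χ (p.2 j * z2 (w j))) = c * ∏ j, χ (q.2 j * z2 (w j)) := by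
    intro w
    set v : Fin n → Fin 2 := fun j => f2 (z2 (w j) + p.1 j) with hv
    have hcondp : ∀ j, z2 (w j) = z2 (v j) + p.1 j := by
      intro j
      rw [hv]
      simp only
      rw [z2_f2, add_assoc, add_self, add_zero]
    have hcondq : ∀ j, z2 (w j) = z2 (v j) + q.1 j := by
      intro j; rw [← h1]; exact hcondp j
    have := congrFun (congrFun h v) w
    simp only [Matrix.smul_apply, smul_eq_mul] at this
    rw [PM_apply, PM_apply, if_pos hcondp, if_pos hcondq] at this
    simpa using this
  have hw0 : ∀ (r : V n), (∏ j, χ (r j * z2 ((fun _ : Fin n => f2 (0:ZMod 2)) j))) = 1 := by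
    intro r
    refine Finset.prod_eq_one fun j _ => ?_
    rw [z2_f2, mul_zero, χ_zero]
  have hc1 : c = 1 := by
    have := key (fun _ => f2 0)
    rw [hw0, hw0, mul_one] at this
    exact this.symm
  have h2 : p.2 = q.2 := by
    funext k
    have := key (fun j => f2 (if j = k then 1 else 0))
    rw [hc1, one_mul] at this
    have ev : ∀ r : V n,
        (∏ j, χ (r j * z2 (f2 (if j = k then (1:ZMod 2) else 0)))) = χ (r k) := by
      intro r
      rw [Fintype.prod_eq_single k]
      · rw [z2_f2, if_pos rfl, mul_one]
      · intro j hj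
        rw [z2_f2, if_neg hj, mul_zero, χ_zero]
    rw [ev, ev] at this
    exact χ_inj _ _ this
  exact Prod.ext h1 h2

/-! ### the symplectic form over ZMod 2 -/

def symp (n : ℕ) : F n → F n → ZMod 2 :=
  fun x y => (∑ j, x.2 j * y.1 j) + (∑ j, y.2 j * x.1 j)

lemma symp_comm (n : ℕ) (x y : F n) : symp n x y = symp n y x := by
  simp [symp, add_comm]

lemma symp_add_left (n : ℕ) (x x' y : F n) :
    symp n (x + x') y = symp n x y + symp n x' y := by
  simp only [symp, Prod.fst_add, Prod.snd_add, Pi.add_apply, add_mul, mul_add,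
    Finset.sum_add_distrib]
  ring

lemma symp_smul_left (n : ℕ) (c : ZMod 2) (x y : F n) :
    symp n (c • x) y = c * symp n x y := by
  simp only [symp, Prod.smul_fst, Prod.smul_snd, Pi.smul_apply, smul_eq_mul,
    Finset.mul_sum, mul_add]
  congr 1 <;> apply Finset.sum_congr rfl <;> intros <;> ring

def sympL (n : ℕ) : F n →ₗ[ZMod 2] Module.Dual (ZMod 2) (F n) :=
  LinearMap.mk₂ (ZMod 2) (symp n)
    (symp_add_left n)
    (fun c x y => by rw [symp_smul_left]; rfl)
    (fun x y y' => by rw [symp_comm n x, symp_add_left, symp_comm n y, symp_comm n y'])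
    (fun c x y => by rw [symp_comm n x, symp_smul_left, symp_comm n x]; rfl)

lemma sympL_apply (n : ℕ) (x y : F n) : sympL n x y = symp n x y := rfl

lemma sympL_inj (n : ℕ) : Function.Injective (sympL n) := by
  rw [injective_iff_map_eq_zero]
  intro x hx
  have h1 : ∀ k, x.1 k = 0 := by
    intro k
    have := congrFun (congrArg DFunLike.coe hx) (0, Pi.single k 1)
    simp only [sympL_apply, symp, LinearMap.zero_apply] at this
    rw [← this]
    simp [Pi.single_apply, Finset.sum_ite_eq', mul_comm]
  have h2 : ∀ k, x.2 k = 0 := by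
    intro k
    have := congrFun (congrArg DFunLike.coe hx) (Pi.single k 1, 0)
    simp only [sympL_apply, symp, LinearMap.zero_apply] at this
    rw [← this]
    simp [Pi.single_apply, Finset.sum_ite_eq']
  ext k
  · exact h1 k
  · exact h2 k

lemma finrank_F (n : ℕ) : Module.finrank (ZMod 2) (F n) = 2 * n := by
  rw [Module.finrank_prod, Module.finrank_pi, Fintype.card_fin]
  ring

/-- A pairwise isotropic set of size `2 ^ n` is closed under addition. -/
theorem iso_closed (n : ℕ) (S : Set (F n)) (h0 : (0 : F n) ∈ S)
    (horth : ∀ x ∈ S, ∀ y ∈ S, symp n x y = 0) (hcard : S.ncard = 2 ^ n) :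
    ∀ x ∈ S, ∀ y ∈ S, x + y ∈ S := by
  classical
  set W := Submodule.span (ZMod 2) S with hW
  have horthW : ∀ x ∈ W, ∀ y ∈ W, symp n x y = 0 := by
    have step : ∀ x ∈ S, ∀ y ∈ W, symp n x y = 0 := by
      intro x hx y hy
      induction hy using Submodule.span_induction with
      | mem z hz => exact horth x hx z hz
      | zero => simp [symp]
      | add a b _ _ ha hb =>
        rw [symp_comm, symp_add_left, symp_comm n a, symp_comm n b, ha, hb, add_zero]
      | smul c a _ ha => rw [symp_comm, symp_smul_left, symp_comm, ha, mul_zero]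
    intro x hx y hy
    induction hx using Submodule.span_induction with
    | mem z hz => exact step z hz y hy
    | zero => simp [symp]
    | add a b _ _ ha hb => rw [symp_add_left, ha, hb, add_zero]
    | smul c a _ ha => rw [symp_smul_left, ha, mul_zero]
  have hmap : W.map (sympL n) ≤ W.dualAnnihilator := by
    rintro φ ⟨x, hx, rfl⟩
    rw [Submodule.mem_dualAnnihilator]
    intro w hw
    exact horthW x hx w hw
  have hrk1 : Module.finrank (ZMod 2) (W.map (sympL n)) = Module.finrank (ZMod 2) W :=
    (LinearEquiv.finrank_eq (Submodule.equivMapOfInjective _ (sympL_inj n) W)).symm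
  have hrk2 : Module.finrank (ZMod 2) W.dualAnnihilator
      = Module.finrank (ZMod 2) (F n) - Module.finrank (ZMod 2) W := by
    rw [← LinearEquiv.finrank_eq (Subspace.quotEquivAnnihilator W)]
    have := Submodule.finrank_quotient_add_finrank W
    omega
  have hrkW_le : Module.finrank (ZMod 2) W ≤ n := by
    have hle := Submodule.finrank_mono hmap
    have hWle : Module.finrank (ZMod 2) W ≤ Module.finrank (ZMod 2) (F n) :=
      Submodule.finrank_le W
    rw [hrk1, hrk2, finrank_F] at *
    omega
  have hfin : Fintype W := Fintype.ofFinite _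
  have hcardW : Nat.card W = 2 ^ Module.finrank (ZMod 2) W := by
    rw [Nat.card_eq_fintype_card, Module.card_eq_pow_finrank (K := ZMod 2), ZMod.card]
  have hsub : S ⊆ (W : Set (F n)) := Submodule.subset_span
  have hSW : S = (W : Set (F n)) := by
    refine Set.eq_of_subset_of_ncard_le hsub ?_ (Set.toFinite _)
    rw [← Nat.card_coe_set_eq, hcard]
    have : Nat.card (W : Set (F n)) = Nat.card W := rfl
    rw [this, hcardW]
    exact Nat.pow_le_pow_right (by norm_num) hrkW_le
  intro x hx y hy
  rw [hSW]
  exact W.add_mem (hsub hx) (hsub hy)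

/-! ### decomposition of Pauli operators -/

lemma pauli_decomp (n : ℕ) (M : QMat n) (h : IsPauliOp n M) :
    ∃ p : F n, ∃ c : ℂ, c ≠ 0 ∧ M = c • PM n p ∧ (p = 0 → M = 1) := by
  obtain ⟨W, hW, rfl⟩ := h
  have hq : ∀ j, ∃ a b : ZMod 2, ∃ c : ℂ, c ≠ 0 ∧ W j = c • Qe a b ∧
      (a = 0 ∧ b = 0 → W j = 1) := by
    intro j
    rcases hW j with h | h | h | h
    · exact ⟨0, 0, 1, one_ne_zero, by rw [one_smul, Qe00']; exact h.trans rfl,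
        fun _ => h.trans rfl⟩
    · refine ⟨1, 0, 1, one_ne_zero, by rw [one_smul, Qe10]; exact h, fun hc => ?_⟩
      exact absurd hc.1 (by decide)
    · refine ⟨1, 1, Complex.I, Complex.I_ne_zero, by rw [← Qe11]; exact h, fun hc => ?_⟩
      exact absurd hc.1 (by decide)
    · refine ⟨0, 1, 1, one_ne_zero, by rw [one_smul, Qe01]; exact h, fun hc => ?_⟩
      exact absurd hc.2 (by decide)
  choose a b c hc hWj hid using hq
  refine ⟨(a, b), ∏ j, c j, Finset.prod_ne_zero_iff.2 fun j _ => hc j, ?_, ?_⟩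
  · rw [PM, ← kron_smul]
    exact congrArg (kron n) (funext fun j => hWj j)
  · intro hp
    have ha : ∀ j, a j = 0 := fun j => congrFun (congrArg Prod.fst hp) j
    have hb : ∀ j, b j = 0 := fun j => congrFun (congrArg Prod.snd hp) j
    have : W = fun _ => (1 : Matrix (Fin 2) (Fin 2) ℂ) := by
      funext j; exact hid j ⟨ha j, hb j⟩
    rw [this, kron_one]

lemma FF_add_self (n : ℕ) (x : F n) : x + x = 0 := by
  apply Prod.ext <;> funext j <;> exact add_self _

lemma FF_add_eq_zero (n : ℕ) (x y : F n) (h : x + y = 0) : x = y := by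
  calc x = (y + y) + x := by rw [FF_add_self, zero_add]
  _ = y + (x + y) := by ring
  _ = y := by rw [h, add_zero]

lemma smul_PM_cancel (n : ℕ) (p : F n) (α β : ℂ) (h : α • PM n p = β • PM n p) :
    α = β := by
  have hne := PM_entry_ne n p (fun _ => f2 0)
  have h2 := congrFun (congrFun h (fun _ => f2 0))
    (fun j => f2 (z2 ((fun _ : Fin n => f2 (0:ZMod 2)) j) + p.1 j))
  simp only [Matrix.smul_apply, smul_eq_mul] at h2
  exact mul_right_cancel₀ hne h2

end MCP

/-- A maximal commuting Pauli class is closed under multiplication up to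
phase. -/
theorem maxClass_mul_closed (n : ℕ) (C : Set (QMat n)) (hC : IsMaxClass n C)
    (U V : QMat n) (hU : U ∈ C) (hV : V ∈ C) (h : ¬ PhaseEq U V) :
    ∃ W ∈ C, PhaseEq (U * V) W := by
  classical
  obtain ⟨hfin, hcard, hform, hcomm, hdist⟩ := hC
  have key : ∀ T, ∃ p : MCP.F n, ∃ c : ℂ,
      T ∈ C → (c ≠ 0 ∧ T = c • MCP.PM n p ∧ p ≠ 0) := by
    intro T
    by_cases hT : T ∈ C
    · obtain ⟨p, c, hc, hTc, hp1⟩ := MCP.pauli_decomp n T (hform T hT).1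
      exact ⟨p, c, fun _ => ⟨hc, hTc, fun h0 => (hform T hT).2 (hp1 h0)⟩⟩
    · exact ⟨0, 0, fun hmem => absurd hmem hT⟩
  choose g cf hg using key
  -- phase equality from equal labels
  have hphase : ∀ T ∈ C, ∀ T' ∈ C, g T = g T' → PhaseEq T T' := by
    intro T hT T' hT' hgg
    obtain ⟨hc1, hT1, -⟩ := hg T hT
    obtain ⟨hc2, hT2, -⟩ := hg T' hT'
    refine ⟨cf T / cf T', div_ne_zero hc1 hc2, ?_⟩
    calc T = cf T • MCP.PM n (g T) := hT1
    _ = cf T • MCP.PM n (g T') := by rw [hgg]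
    _ = (cf T / cf T') • (cf T' • MCP.PM n (g T')) := by
        rw [smul_smul, div_mul_cancel₀ _ hc2]
    _ = (cf T / cf T') • T' := by rw [← hT2]
  have hginj : Set.InjOn g C := by
    intro T hT T' hT' hgg
    by_contra hne
    exact hdist T hT T' hT' hne (hphase T hT T' hT' hgg)
  -- commutation gives isotropy
  have horthC : ∀ T ∈ C, ∀ T' ∈ C, MCP.symp n (g T) (g T') = 0 := by
    intro T hT T' hT'
    obtain ⟨hc1, hT1, -⟩ := hg T hT
    obtain ⟨hc2, hT2, -⟩ := hg T' hT'
    have e1 : T * T' = (cf T * cf T' * MCP.χ (∑ j, (g T).2 j * (g T').1 j))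
        • MCP.PM n (g T + g T') := by
      conv_lhs => rw [hT1, hT2]
      rw [Matrix.smul_mul, Matrix.mul_smul, MCP.PM_mul, smul_smul, smul_smul]
    have e2 : T' * T = (cf T' * cf T * MCP.χ (∑ j, (g T').2 j * (g T).1 j))
        • MCP.PM n (g T + g T') := by
      conv_lhs => rw [hT2, hT1]
      rw [Matrix.smul_mul, Matrix.mul_smul, MCP.PM_mul, smul_smul, smul_smul,
        add_comm (g T') (g T)]
    have e3 := MCP.smul_PM_cancel n (g T + g T') _ _
      (e1.symm.trans ((hcomm T hT T' hT').trans e2))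
    rw [mul_comm (cf T') (cf T)] at e3
    have hχ := mul_left_cancel₀ (mul_ne_zero hc1 hc2) e3
    have hsum := MCP.χ_inj _ _ hχ
    show (∑ j, (g T).2 j * (g T').1 j) + (∑ j, (g T').2 j * (g T).1 j) = 0
    rw [hsum, MCP.add_self]
  -- the set of labels
  set S : Set (MCP.F n) := insert 0 (g '' C) with hS
  have h0S : (0 : MCP.F n) ∈ S := Set.mem_insert _ _
  have h0notin : (0 : MCP.F n) ∉ g '' C := by
    rintro ⟨T, hT, hT0⟩
    exact (hg T hT).2.2 hT0
  have hcardS : S.ncard = 2 ^ n := by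
    rw [hS, Set.ncard_insert_of_notMem h0notin (hfin.image g),
      Set.ncard_image_of_injOn hginj, hcard]
    have : 1 ≤ 2 ^ n := Nat.one_le_pow _ _ (by norm_num)
    omega
  have horthS : ∀ x ∈ S, ∀ y ∈ S, MCP.symp n x y = 0 := by
    rintro x hx y hy
    rcases hx with rfl | ⟨T, hT, rfl⟩
    · simp [MCP.symp]
    rcases hy with rfl | ⟨T', hT', rfl⟩
    · simp [MCP.symp]
    exact horthC T hT T' hT'
  have hclosed := MCP.iso_closed n S h0S horthS hcardS
  have hgU : g U ∈ S := Set.mem_insert_of_mem _ ⟨U, hU, rfl⟩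
  have hgV : g V ∈ S := Set.mem_insert_of_mem _ ⟨V, hV, rfl⟩
  have hsum_mem : g U + g V ∈ S := hclosed _ hgU _ hgV
  have hsum_ne : g U + g V ≠ 0 := by
    intro h0
    have hUV : U = V := hginj hU hV (MCP.FF_add_eq_zero n _ _ h0)
    subst hUV
    exact h ⟨1, one_ne_zero, (one_smul _ _).symm⟩
  have hmem' : g U + g V ∈ g '' C := by
    rcases hsum_mem with h0 | hmem
    · exact absurd h0 hsum_ne
    · exact hmem
  obtain ⟨T, hT, hgT⟩ := hmem'
  refine ⟨T, hT, ?_⟩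
  obtain ⟨hcU, hU1, -⟩ := hg U hU
  obtain ⟨hcV, hV1, -⟩ := hg V hV
  obtain ⟨hcT, hT1, -⟩ := hg T hT
  rw [hgT] at hT1
  refine ⟨cf U * cf V * MCP.χ (∑ j, (g U).2 j * (g V).1 j) / cf T,
    div_ne_zero (mul_ne_zero (mul_ne_zero hcU hcV) (MCP.χ_ne _)) hcT, ?_⟩
  have e1 : U * V = (cf U * cf V * MCP.χ (∑ j, (g U).2 j * (g V).1 j))
      • MCP.PM n (g U + g V) := by
    conv_lhs => rw [hU1, hV1]
    rw [Matrix.smul_mul, Matrix.mul_smul, MCP.PM_mul, smul_smul, smul_smul]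
  calc U * V = (cf U * cf V * MCP.χ (∑ j, (g U).2 j * (g V).1 j))
      • MCP.PM n (g U + g V) := e1
  _ = (cf U * cf V * MCP.χ (∑ j, (g U).2 j * (g V).1 j) / cf T)
      • (cf T • MCP.PM n (g U + g V)) := by
      rw [smul_smul, div_mul_cancel₀ _ hcT]
  _ = (cf U * cf V * MCP.χ (∑ j, (g U).2 j * (g V).1 j) / cf T) • T := by rw [← hT1]
end
end

section
/- Any two disjoint maximal commuting Pauli classes C₁ and C₂ in dimension d = 4 can be extended to a complete set: there exist maximal commuting Pauli classes C₃, C₄, C₅ such that {C₁, C₂, C₃, C₄, C₅} is a family of five pairwise disjoint maximal commuting Pauli classes, and hence every non-identity two-qubit Pauli operator is equal up to phase to a member of exactly one of these five classes. -/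
open Matrix

noncomputable section

/-! ### Auxiliary machinery -/

section Aux

def pmat : Fin 4 → Matrix (Fin 2) (Fin 2) ℂ := ![pI, pX, pY, pZ]
def phs : Fin 4 → Fin 4 → ℂ :=
  ![![1,1,1,1], ![1,1,Complex.I,-Complex.I], ![1,-Complex.I,1,Complex.I], ![1,Complex.I,-Complex.I,1]]
def pxor : Fin 4 → Fin 4 → Fin 4 :=
  ![![0,1,2,3], ![1,0,3,2], ![2,3,0,1], ![3,2,1,0]]
def w1 (a b : Fin 4) : Prop := a ≠ 0 ∧ b ≠ 0 ∧ a ≠ b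
instance w1.dec (a b : Fin 4) : Decidable (w1 a b) := by unfold w1; infer_instance

lemma pmul (a b : Fin 4) : pmat a * pmat b = phs a b • pmat (pxor a b) := by
  fin_cases a <;> fin_cases b <;>
    · ext i j
      fin_cases i <;> fin_cases j <;>
        simp [pmat, phs, pxor, pI, pX, pY, pZ, Matrix.mul_apply, Fin.sum_univ_two,
          Matrix.one_apply, Matrix.vecHead, Matrix.vecTail]

lemma ptrace (a : Fin 4) : Matrix.trace (pmat a) = if a = 0 then 2 else 0 := by
  fin_cases a <;> simp [pmat, pI, pX, pY, pZ, Matrix.trace_fin_two, Matrix.vecHead, Matrix.vecTail]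

lemma phs_ne (a b : Fin 4) : phs a b ≠ 0 := by
  fin_cases a <;> fin_cases b <;>
    simp [phs, Complex.I_ne_zero, Matrix.vecHead, Matrix.vecTail]

lemma phs_diag (a : Fin 4) : phs a a = 1 := by
  fin_cases a <;> simp [phs, Matrix.vecHead, Matrix.vecTail]

lemma phs_symm (a b : Fin 4) : phs b a = (if w1 a b then -1 else 1) * phs a b := by
  fin_cases a <;> fin_cases b <;>
    simp [phs, w1, Matrix.vecHead, Matrix.vecTail]

lemma pxor_self (a : Fin 4) : pxor a a = 0 := by fin_cases a <;> rfl
lemma pxor_comm (a b : Fin 4) : pxor a b = pxor b a := by fin_cases a <;> fin_cases b <;> rfl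
lemma pxor_eq_zero {a b : Fin 4} : pxor a b = 0 ↔ a = b := by
  fin_cases a <;> fin_cases b <;> simp [pxor]

/-! ### The Kronecker layer -/

abbrev PL := Fin 4 × Fin 4

def fe : (Fin 2 → Fin 2) ≃ (Fin 2 × Fin 2) := piFinTwoEquiv (fun _ => Fin 2)

lemma kron2 (A B : Matrix (Fin 2) (Fin 2) ℂ) :
    kron 2 ![A, B] = (Matrix.kroneckerMap (· * ·) A B).submatrix fe fe := by
  ext v w
  simp [kron, Fin.prod_univ_two, Matrix.submatrix_apply, fe, Matrix.kroneckerMap_apply,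
    piFinTwoEquiv]

def Mop (p : PL) : QMat 2 := kron 2 ![pmat p.1, pmat p.2]

def padd (p q : PL) : PL := (pxor p.1 q.1, pxor p.2 q.2)
def mphs (p q : PL) : ℂ := phs p.1 q.1 * phs p.2 q.2

lemma Mop_eq (p : PL) :
    Mop p = (Matrix.kroneckerMap (· * ·) (pmat p.1) (pmat p.2)).submatrix fe fe := kron2 _ _

lemma Mop_mul (p q : PL) : Mop p * Mop q = mphs p q • Mop (padd p q) := by
  rw [Mop_eq, Mop_eq, Mop_eq, Matrix.submatrix_mul_equiv, ← Matrix.mul_kronecker_mul,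
    pmul, pmul, Matrix.smul_kronecker, Matrix.kronecker_smul, smul_smul, Matrix.submatrix_smul]
  rfl

lemma Mop_zero : Mop (0, 0) = 1 := by
  rw [Mop_eq]
  show (Matrix.kroneckerMap (· * ·) (pmat 0) (pmat 0)).submatrix fe fe = 1
  have : pmat 0 = (1 : Matrix (Fin 2) (Fin 2) ℂ) := rfl
  rw [this, Matrix.one_kronecker_one, Matrix.submatrix_one_equiv]

lemma Mop_trace (p : PL) :
    Matrix.trace (Mop p) = (if p.1 = 0 then 2 else 0) * (if p.2 = 0 then 2 else 0) := by
  rw [Mop_eq]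
  have h : Matrix.trace ((Matrix.kroneckerMap (· * ·) (pmat p.1) (pmat p.2)).submatrix fe fe)
      = Matrix.trace (Matrix.kroneckerMap (· * ·) (pmat p.1) (pmat p.2)) := by
    simp only [Matrix.trace, Matrix.diag, Matrix.submatrix_apply]
    exact Fintype.sum_equiv fe _ _ (fun i => rfl)
  rw [h, Matrix.trace_kronecker, ptrace, ptrace]

lemma Mop_sq (p : PL) : Mop p * Mop p = 1 := by
  rw [Mop_mul]
  have : padd p p = (0, 0) := by simp [padd, pxor_self]
  rw [this, Mop_zero, mphs, phs_diag, phs_diag]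
  simp

lemma padd_eq_zero {p q : PL} : padd p q = (0, 0) ↔ p = q := by
  constructor
  · intro h
    have h1 := congrArg Prod.fst h
    have h2 := congrArg Prod.snd h
    exact Prod.ext (pxor_eq_zero.mp h1) (pxor_eq_zero.mp h2)
  · rintro rfl; simp [padd, pxor_self]

lemma trace_Mop_ne_zero {p : PL} (hp : p ≠ (0, 0)) : Matrix.trace (Mop p) = 0 := by
  rw [Mop_trace]
  by_cases h1 : p.1 = 0
  · have h2 : p.2 ≠ 0 := fun h2 => hp (Prod.ext h1 h2)
    simp [h2]
  · simp [h1]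

lemma trace_one' : Matrix.trace (1 : QMat 2) = 4 := by
  rw [Matrix.trace_one]; norm_num

lemma notPhase {p q : PL} (h : p ≠ q) : ¬ PhaseEq (Mop p) (Mop q) := by
  rintro ⟨c, hc, hEq⟩
  have h1 : Mop p * Mop q = mphs p q • Mop (padd p q) := Mop_mul p q
  have h2 : Mop p * Mop q = c • (1 : QMat 2) := by
    rw [hEq, Matrix.smul_mul, Mop_sq]
  have ht : Matrix.trace (mphs p q • Mop (padd p q)) = Matrix.trace (c • (1 : QMat 2)) := by
    rw [← h1, h2]
  rw [Matrix.trace_smul, Matrix.trace_smul, trace_Mop_ne_zero (fun hz => h (padd_eq_zero.mp hz)),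
    trace_one'] at ht
  simp at ht
  exact hc ht

lemma Mop_inj {p q : PL} (h : Mop p = Mop q) : p = q := by
  by_contra hne
  exact notPhase hne ⟨1, one_ne_zero, by simp [h]⟩

def AC (p q : PL) : Prop := Xor' (w1 p.1 q.1) (w1 p.2 q.2)
instance AC.dec (p q : PL) : Decidable (AC p q) := by unfold AC; exact decidable_of_iff _ xor_def.symm

lemma mphs_ne (p q : PL) : mphs p q ≠ 0 := mul_ne_zero (phs_ne _ _) (phs_ne _ _)

lemma padd_comm (p q : PL) : padd p q = padd q p := by simp [padd, pxor_comm]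

lemma mphs_symm (p q : PL) : mphs q p = (if AC p q then -1 else 1) * mphs p q := by
  unfold mphs AC
  rw [phs_symm p.1 q.1, phs_symm p.2 q.2]
  by_cases h1 : w1 p.1 q.1 <;> by_cases h2 : w1 p.2 q.2 <;>
    simp [h1, h2, Xor'] <;> ring

lemma Mop_comm {p q : PL} (h : ¬ AC p q) : Mop p * Mop q = Mop q * Mop p := by
  rw [Mop_mul, Mop_mul, padd_comm q p, mphs_symm p q, if_neg h, one_mul]

lemma Mop_ncomm {p q : PL} (h : AC p q) : Mop p * Mop q ≠ Mop q * Mop p := by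
  intro hEq
  rw [Mop_mul, Mop_mul, padd_comm q p, mphs_symm p q, if_pos h] at hEq
  have := congrArg (fun M => Matrix.trace (M * Mop (padd p q))) hEq
  simp only [Matrix.smul_mul, Mop_sq, Matrix.trace_smul, trace_one', smul_eq_mul] at this
  exact mphs_ne p q (by linear_combination this / 8)

lemma Mop_isPauli (p : PL) : IsPauliOp 2 (Mop p) := by
  refine ⟨![pmat p.1, pmat p.2], fun j => ?_, rfl⟩
  obtain ⟨a, b⟩ := p
  have key : ∀ c : Fin 4, pmat c = pI ∨ pmat c = pX ∨ pmat c = pY ∨ pmat c = pZ := by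
    intro c
    fin_cases c <;> simp [pmat, Matrix.vecHead, Matrix.vecTail]
  fin_cases j
  · simpa using key a
  · simpa using key b

lemma pauli_label {M : QMat 2} (h : IsPauliOp 2 M) : ∃ p : PL, M = Mop p := by
  obtain ⟨W, hW, rfl⟩ := h
  have l : ∀ j, ∃ a : Fin 4, W j = pmat a := by
    intro j
    rcases hW j with h | h | h | h
    · exact ⟨0, h⟩
    · exact ⟨1, h⟩
    · exact ⟨2, h⟩
    · exact ⟨3, h⟩
  obtain ⟨a, ha⟩ := l 0
  obtain ⟨b, hb⟩ := l 1
  refine ⟨(a, b), ?_⟩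
  have : W = ![pmat a, pmat b] := by
    funext j; fin_cases j <;> simpa using by assumption
  rw [this]; rfl

lemma PhaseEq.refl' {m : Type*} (A : Matrix m m ℂ) : PhaseEq A A :=
  ⟨1, one_ne_zero, (one_smul _ _).symm⟩

/-! ### The line tables -/

def lA : Fin 15 → PL := ![(0,1), (0,1), (0,1), (0,2), (0,2), (0,2), (0,3), (0,3), (0,3), (1,1), (1,1), (1,2), (1,2), (1,3), (1,3)]
def lB : Fin 15 → PL := ![(1,0), (2,0), (3,0), (1,0), (2,0), (3,0), (1,0), (2,0), (3,0), (2,2), (2,3), (2,1), (2,3), (2,1), (2,2)]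
def comp : Fin 15 → Fin 15 → Fin 15 × Fin 15 × Fin 15 := ![
  ![(0,0,0), (0,0,0), (0,0,0), (0,0,0), (8,12,13), (7,11,14), (0,0,0), (5,11,14), (4,12,13), (0,0,0), (0,0,0), (5,7,14), (4,8,13), (4,8,12), (5,7,11)],
  ![(0,0,0), (0,0,0), (0,0,0), (8,10,14), (0,0,0), (6,9,12), (5,9,12), (0,0,0), (3,10,14), (5,6,12), (3,8,14), (0,0,0), (5,6,9), (0,0,0), (3,8,10)],
  ![(0,0,0), (0,0,0), (0,0,0), (7,9,13), (6,10,11), (0,0,0), (4,10,11), (3,9,13), (0,0,0), (3,7,13), (4,6,11), (4,6,10), (0,0,0), (3,7,9), (0,0,0)],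
  ![(0,0,0), (8,10,14), (7,9,13), (0,0,0), (0,0,0), (0,0,0), (0,0,0), (2,9,13), (1,10,14), (2,7,13), (1,8,14), (0,0,0), (0,0,0), (2,7,9), (1,8,10)],
  ![(8,12,13), (0,0,0), (6,10,11), (0,0,0), (0,0,0), (0,0,0), (2,10,11), (0,0,0), (0,12,13), (0,0,0), (2,6,11), (2,6,10), (0,8,13), (0,8,12), (0,0,0)],
  ![(7,11,14), (6,9,12), (0,0,0), (0,0,0), (0,0,0), (0,0,0), (1,9,12), (0,11,14), (0,0,0), (1,6,12), (0,0,0), (0,7,14), (1,6,9), (0,0,0), (0,7,11)],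
  ![(0,0,0), (5,9,12), (4,10,11), (0,0,0), (2,10,11), (1,9,12), (0,0,0), (0,0,0), (0,0,0), (1,5,12), (2,4,11), (2,4,10), (1,5,9), (0,0,0), (0,0,0)],
  ![(5,11,14), (0,0,0), (3,9,13), (2,9,13), (0,0,0), (0,11,14), (0,0,0), (0,0,0), (0,0,0), (2,3,13), (0,0,0), (0,5,14), (0,0,0), (2,3,9), (0,5,11)],
  ![(4,12,13), (3,10,14), (0,0,0), (1,10,14), (0,12,13), (0,0,0), (0,0,0), (0,0,0), (0,0,0), (0,0,0), (1,3,14), (0,0,0), (0,4,13), (0,4,12), (1,3,10)],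
  ![(0,0,0), (5,6,12), (3,7,13), (2,7,13), (0,0,0), (1,6,12), (1,5,12), (2,3,13), (0,0,0), (0,0,0), (0,0,0), (0,0,0), (1,5,6), (2,3,7), (0,0,0)],
  ![(0,0,0), (3,8,14), (4,6,11), (1,8,14), (2,6,11), (0,0,0), (2,4,11), (0,0,0), (1,3,14), (0,0,0), (0,0,0), (2,4,6), (0,0,0), (0,0,0), (1,3,8)],
  ![(5,7,14), (0,0,0), (4,6,10), (0,0,0), (2,6,10), (0,7,14), (2,4,10), (0,5,14), (0,0,0), (0,0,0), (2,4,6), (0,0,0), (0,0,0), (0,0,0), (0,5,7)],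
  ![(4,8,13), (5,6,9), (0,0,0), (0,0,0), (0,8,13), (1,6,9), (1,5,9), (0,0,0), (0,4,13), (1,5,6), (0,0,0), (0,0,0), (0,0,0), (0,4,8), (0,0,0)],
  ![(4,8,12), (0,0,0), (3,7,9), (2,7,9), (0,8,12), (0,0,0), (0,0,0), (2,3,9), (0,4,12), (2,3,7), (0,0,0), (0,0,0), (0,4,8), (0,0,0), (0,0,0)],
  ![(5,7,11), (3,8,10), (0,0,0), (1,8,10), (0,0,0), (0,7,11), (0,0,0), (0,5,11), (1,3,10), (0,0,0), (1,3,8), (0,5,7), (0,0,0), (0,0,0), (0,0,0)]]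

def lineMem (i : Fin 15) (p : PL) : Prop := p = lA i ∨ p = lB i ∨ p = padd (lA i) (lB i)
instance lineMem.dec (i : Fin 15) (p : PL) : Decidable (lineMem i p) := by
  unfold lineMem; infer_instance
def LDisj (i j : Fin 15) : Prop := ∀ p : PL, ¬ (lineMem i p ∧ lineMem j p)
instance LDisj.dec (i j : Fin 15) : Decidable (LDisj i j) := by unfold LDisj; infer_instance

lemma LDisj_symm {i j : Fin 15} (h : LDisj i j) : LDisj j i :=
  fun p hp => h p ⟨hp.2, hp.1⟩

set_option maxHeartbeats 2000000 in
set_option synthInstance.maxHeartbeats 1000000 in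
set_option synthInstance.maxSize 1000 in
lemma D1 : ∀ p q r : PL, p ≠ (0,0) → q ≠ (0,0) → r ≠ (0,0) → p ≠ q → p ≠ r → q ≠ r →
    ¬ AC p q → ¬ AC p r → ¬ AC q r → r = padd p q := by decide

set_option maxHeartbeats 2000000 in
set_option synthInstance.maxHeartbeats 1000000 in
set_option synthInstance.maxSize 1000 in
lemma D2 : ∀ p q : PL, p ≠ (0,0) → q ≠ (0,0) → p ≠ q → ¬ AC p q →
    ∃ i : Fin 15, lineMem i p ∧ lineMem i q := by decide

set_option maxHeartbeats 2000000 in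
set_option synthInstance.maxHeartbeats 1000000 in
set_option synthInstance.maxSize 1000 in
lemma D3 : ∀ (i : Fin 15) (p q : PL), lineMem i p → lineMem i q → p ≠ (0,0) ∧ ¬ AC p q := by
  decide

set_option maxHeartbeats 2000000 in
set_option synthInstance.maxHeartbeats 1000000 in
set_option synthInstance.maxSize 1000 in
lemma D4 : ∀ i : Fin 15,
    lA i ≠ lB i ∧ lA i ≠ padd (lA i) (lB i) ∧ lB i ≠ padd (lA i) (lB i) := by decide

set_option maxHeartbeats 4000000 in
set_option synthInstance.maxHeartbeats 1000000 in
set_option synthInstance.maxSize 1000 in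
lemma D5 : ∀ (i : Fin 15) (p q : PL), p ≠ q → lineMem i p → lineMem i q →
    ∀ r : PL, lineMem i r ↔ (r = p ∨ r = q ∨ r = padd p q) := by decide

set_option maxHeartbeats 4000000 in
set_option synthInstance.maxHeartbeats 1000000 in
set_option synthInstance.maxSize 1000 in
lemma D6 : ∀ i j : Fin 15, LDisj i j →
    LDisj i (comp i j).1 ∧ LDisj i (comp i j).2.1 ∧ LDisj i (comp i j).2.2 ∧
    LDisj j (comp i j).1 ∧ LDisj j (comp i j).2.1 ∧ LDisj j (comp i j).2.2 ∧
    LDisj (comp i j).1 (comp i j).2.1 ∧ LDisj (comp i j).1 (comp i j).2.2 ∧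
    LDisj (comp i j).2.1 (comp i j).2.2 ∧
    (∀ p : PL, p ≠ (0,0) → lineMem i p ∨ lineMem j p ∨
      lineMem (comp i j).1 p ∨ lineMem (comp i j).2.1 p ∨ lineMem (comp i j).2.2 p) := by decide

/-! ### Classes from lines -/

def MSet (i : Fin 15) : Set (QMat 2) := {M | ∃ p : PL, lineMem i p ∧ M = Mop p}

lemma MSet_eq_of_line {i : Fin 15} {p1 p2 p3 : PL}
    (h : ∀ r, lineMem i r ↔ (r = p1 ∨ r = p2 ∨ r = p3)) :
    MSet i = {Mop p1, Mop p2, Mop p3} := by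
  ext M
  simp only [MSet, Set.mem_setOf_eq, Set.mem_insert_iff, Set.mem_singleton_iff]
  constructor
  · rintro ⟨p, hp, rfl⟩
    rcases (h p).1 hp with rfl | rfl | rfl <;> tauto
  · rintro (rfl | rfl | rfl)
    exacts [⟨p1, (h p1).2 (Or.inl rfl), rfl⟩, ⟨p2, (h p2).2 (Or.inr (Or.inl rfl)), rfl⟩,
      ⟨p3, (h p3).2 (Or.inr (Or.inr rfl)), rfl⟩]

lemma MSet_triple (i : Fin 15) :
    MSet i = {Mop (lA i), Mop (lB i), Mop (padd (lA i) (lB i))} := by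
  apply MSet_eq_of_line
  intro r
  rfl

lemma maxclass_MSet (i : Fin 15) : IsMaxClass 2 (MSet i) := by
  obtain ⟨hab, hac, hbc⟩ := D4 i
  have htr := MSet_triple i
  refine ⟨?_, ?_, ?_, ?_, ?_⟩
  · rw [htr]
    exact (Set.finite_singleton _).insert _ |>.insert _
  · rw [htr]
    have h3 : ({Mop (lA i), Mop (lB i), Mop (padd (lA i) (lB i))} : Set (QMat 2)).ncard = 3 :=
      Set.ncard_eq_three.mpr ⟨_, _, _, fun h => hab (Mop_inj h), fun h => hac (Mop_inj h),
        fun h => hbc (Mop_inj h), rfl⟩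
    rw [h3]
    norm_num
  · rintro U ⟨p, hp, rfl⟩
    refine ⟨Mop_isPauli p, ?_⟩
    intro h
    exact (D3 i p p hp hp).1 (Mop_inj (h.trans Mop_zero.symm))
  · rintro U ⟨p, hp, rfl⟩ V ⟨q, hq, rfl⟩
    exact Mop_comm (D3 i p q hp hq).2
  · rintro U ⟨p, hp, rfl⟩ V ⟨q, hq, rfl⟩ hne
    exact notPhase (fun h => hne (by rw [h]))

lemma CD_of {C D : Set (QMat 2)} {a b : Fin 15} (e : C = MSet a) (f : D = MSet b)
    (h : LDisj a b) : ClassDisjoint C D := by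
  subst e f
  rintro U ⟨p, hp, rfl⟩ V ⟨q, hq, rfl⟩
  exact notPhase (fun hpq => h p ⟨hp, hpq ▸ hq⟩)

lemma class_line {p1 p2 p3 : PL}
    (n1 : p1 ≠ (0,0)) (n2 : p2 ≠ (0,0)) (n3 : p3 ≠ (0,0))
    (d12 : p1 ≠ p2) (d13 : p1 ≠ p3) (d23 : p2 ≠ p3)
    (c12 : ¬ AC p1 p2) (c13 : ¬ AC p1 p3) (c23 : ¬ AC p2 p3) :
    ∃ i : Fin 15, ∀ r, lineMem i r ↔ (r = p1 ∨ r = p2 ∨ r = p3) := by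
  obtain ⟨i, m1, m2⟩ := D2 p1 p2 n1 n2 d12 c12
  have h3 : p3 = padd p1 p2 := D1 p1 p2 p3 n1 n2 n3 d12 d13 d23 c12 c13 c23
  exact ⟨i, fun r => by rw [D5 i p1 p2 d12 m1 m2 r, ← h3]⟩

end Aux

/-- Any two disjoint maximal commuting Pauli classes in `d = 4` extend to a
complete set of five pairwise disjoint maximal commuting Pauli classes, and then every
non-identity two-qubit Pauli operator is equal up to phase to a member of exactly one of
the five classes. -/
theorem extend_two_to_complete_d4 (C₁ C₂ : Set (QMat 2))
    (h1 : IsMaxClass 2 C₁) (h2 : IsMaxClass 2 C₂) (hd : ClassDisjoint C₁ C₂) :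
    ∃ C₃ C₄ C₅ : Set (QMat 2),
      (∀ k, IsMaxClass 2 (![C₁, C₂, C₃, C₄, C₅] k)) ∧
      (∀ k l, k ≠ l → ClassDisjoint (![C₁, C₂, C₃, C₄, C₅] k) (![C₁, C₂, C₃, C₄, C₅] l)) ∧
      (∀ M : QMat 2, IsPauliOp 2 M → M ≠ 1 →
        ∃! k : Fin 5, ∃ V ∈ ![C₁, C₂, C₃, C₄, C₅] k, PhaseEq M V) := by
  -- Extract the three elements and labels of C₁ and C₂.
  obtain ⟨hfin1, hcard1, hmem1, hcomm1, hdist1⟩ := h1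
  obtain ⟨hfin2, hcard2, hmem2, hcomm2, hdist2⟩ := h2
  obtain ⟨U1, U2, U3, hU12, hU13, hU23, hC1⟩ := Set.ncard_eq_three.mp (by simpa using hcard1)
  obtain ⟨V1, V2, V3, hV12, hV13, hV23, hC2⟩ := Set.ncard_eq_three.mp (by simpa using hcard2)
  have mU1 : U1 ∈ C₁ := by rw [hC1]; exact Set.mem_insert _ _
  have mU2 : U2 ∈ C₁ := by rw [hC1]; exact Set.mem_insert_of_mem _ (Set.mem_insert _ _)
  have mU3 : U3 ∈ C₁ := by rw [hC1]; exact Set.mem_insert_of_mem _ (Set.mem_insert_of_mem _ rfl)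
  have mV1 : V1 ∈ C₂ := by rw [hC2]; exact Set.mem_insert _ _
  have mV2 : V2 ∈ C₂ := by rw [hC2]; exact Set.mem_insert_of_mem _ (Set.mem_insert _ _)
  have mV3 : V3 ∈ C₂ := by rw [hC2]; exact Set.mem_insert_of_mem _ (Set.mem_insert_of_mem _ rfl)
  obtain ⟨p1, hp1⟩ := pauli_label (hmem1 U1 mU1).1
  obtain ⟨p2, hp2⟩ := pauli_label (hmem1 U2 mU2).1
  obtain ⟨p3, hp3⟩ := pauli_label (hmem1 U3 mU3).1
  obtain ⟨q1, hq1⟩ := pauli_label (hmem2 V1 mV1).1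
  obtain ⟨q2, hq2⟩ := pauli_label (hmem2 V2 mV2).1
  obtain ⟨q3, hq3⟩ := pauli_label (hmem2 V3 mV3).1
  have np1 : p1 ≠ (0,0) := fun h => (hmem1 U1 mU1).2 (by rw [hp1, h, Mop_zero])
  have np2 : p2 ≠ (0,0) := fun h => (hmem1 U2 mU2).2 (by rw [hp2, h, Mop_zero])
  have np3 : p3 ≠ (0,0) := fun h => (hmem1 U3 mU3).2 (by rw [hp3, h, Mop_zero])
  have nq1 : q1 ≠ (0,0) := fun h => (hmem2 V1 mV1).2 (by rw [hq1, h, Mop_zero])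
  have nq2 : q2 ≠ (0,0) := fun h => (hmem2 V2 mV2).2 (by rw [hq2, h, Mop_zero])
  have nq3 : q3 ≠ (0,0) := fun h => (hmem2 V3 mV3).2 (by rw [hq3, h, Mop_zero])
  have dp12 : p1 ≠ p2 := fun h => hU12 (by rw [hp1, hp2, h])
  have dp13 : p1 ≠ p3 := fun h => hU13 (by rw [hp1, hp3, h])
  have dp23 : p2 ≠ p3 := fun h => hU23 (by rw [hp2, hp3, h])
  have dq12 : q1 ≠ q2 := fun h => hV12 (by rw [hq1, hq2, h])
  have dq13 : q1 ≠ q3 := fun h => hV13 (by rw [hq1, hq3, h])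
  have dq23 : q2 ≠ q3 := fun h => hV23 (by rw [hq2, hq3, h])
  have cp12 : ¬ AC p1 p2 := fun h => Mop_ncomm h (by rw [← hp1, ← hp2]; exact hcomm1 U1 mU1 U2 mU2)
  have cp13 : ¬ AC p1 p3 := fun h => Mop_ncomm h (by rw [← hp1, ← hp3]; exact hcomm1 U1 mU1 U3 mU3)
  have cp23 : ¬ AC p2 p3 := fun h => Mop_ncomm h (by rw [← hp2, ← hp3]; exact hcomm1 U2 mU2 U3 mU3)
  have cq12 : ¬ AC q1 q2 := fun h => Mop_ncomm h (by rw [← hq1, ← hq2]; exact hcomm2 V1 mV1 V2 mV2)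
  have cq13 : ¬ AC q1 q3 := fun h => Mop_ncomm h (by rw [← hq1, ← hq3]; exact hcomm2 V1 mV1 V3 mV3)
  have cq23 : ¬ AC q2 q3 := fun h => Mop_ncomm h (by rw [← hq2, ← hq3]; exact hcomm2 V2 mV2 V3 mV3)
  have cross : ∀ {u v : QMat 2}, u ∈ C₁ → v ∈ C₂ → ∀ {x y : PL},
      u = Mop x → v = Mop y → x = y → False := by
    intro u v hu hv x y hx hy hxy
    exact hd u hu v hv (by rw [hx, hy, hxy]; exact PhaseEq.refl' _)
  obtain ⟨i, hiLine⟩ := class_line np1 np2 np3 dp12 dp13 dp23 cp12 cp13 cp23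
  obtain ⟨j, hjLine⟩ := class_line nq1 nq2 nq3 dq12 dq13 dq23 cq12 cq13 cq23
  have e1 : C₁ = MSet i := by
    rw [hC1, hp1, hp2, hp3, ← MSet_eq_of_line hiLine]
  have e2 : C₂ = MSet j := by
    rw [hC2, hq1, hq2, hq3, ← MSet_eq_of_line hjLine]
  have hij : LDisj i j := by
    intro x hx
    obtain ⟨hxi, hxj⟩ := hx
    rcases (hiLine x).1 hxi with rfl | rfl | rfl <;> rcases (hjLine x).1 hxj with h | h | h
    exacts [cross mU1 mV1 hp1 hq1 h, cross mU1 mV2 hp1 hq2 h, cross mU1 mV3 hp1 hq3 h,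
      cross mU2 mV1 hp2 hq1 h, cross mU2 mV2 hp2 hq2 h, cross mU2 mV3 hp2 hq3 h,
      cross mU3 mV1 hp3 hq1 h, cross mU3 mV2 hp3 hq2 h, cross mU3 mV3 hp3 hq3 h]
  obtain ⟨dik, dil, dim', djk, djl, djm, dkl, dkm, dlm, cov⟩ := D6 i j hij
  refine ⟨MSet (comp i j).1, MSet (comp i j).2.1, MSet (comp i j).2.2, ?_, ?_, ?_⟩
  · intro n
    fin_cases n
    · show IsMaxClass 2 C₁; rw [e1]; exact maxclass_MSet i
    · show IsMaxClass 2 C₂; rw [e2]; exact maxclass_MSet j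
    · exact maxclass_MSet _
    · exact maxclass_MSet _
    · exact maxclass_MSet _
  · intro n m hnm
    fin_cases n <;> fin_cases m
    exacts [absurd rfl hnm, CD_of e1 e2 hij, CD_of e1 rfl dik, CD_of e1 rfl dil, CD_of e1 rfl dim',
      CD_of e2 e1 (LDisj_symm hij), absurd rfl hnm, CD_of e2 rfl djk, CD_of e2 rfl djl,
        CD_of e2 rfl djm,
      CD_of rfl e1 (LDisj_symm dik), CD_of rfl e2 (LDisj_symm djk), absurd rfl hnm,
        CD_of rfl rfl dkl, CD_of rfl rfl dkm,
      CD_of rfl e1 (LDisj_symm dil), CD_of rfl e2 (LDisj_symm djl), CD_of rfl rfl (LDisj_symm dkl),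
        absurd rfl hnm, CD_of rfl rfl dlm,
      CD_of rfl e1 (LDisj_symm dim'), CD_of rfl e2 (LDisj_symm djm), CD_of rfl rfl (LDisj_symm dkm),
        CD_of rfl rfl (LDisj_symm dlm), absurd rfl hnm]
  · intro M hM hM1
    obtain ⟨p, rfl⟩ := pauli_label hM
    have np : p ≠ (0,0) := fun h => hM1 (by rw [h, Mop_zero])
    have key : ∀ n : Fin 5,
        (![C₁, C₂, MSet (comp i j).1, MSet (comp i j).2.1, MSet (comp i j).2.2] n)
          = MSet (![i, j, (comp i j).1, (comp i j).2.1, (comp i j).2.2] n) := by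
      intro n
      fin_cases n
      exacts [e1, e2, rfl, rfl, rfl]
    have hLD : ∀ n m : Fin 5, n ≠ m →
        LDisj (![i, j, (comp i j).1, (comp i j).2.1, (comp i j).2.2] n)
          (![i, j, (comp i j).1, (comp i j).2.1, (comp i j).2.2] m) := by
      intro n m hnm
      fin_cases n <;> fin_cases m
      exacts [absurd rfl hnm, hij, dik, dil, dim',
        LDisj_symm hij, absurd rfl hnm, djk, djl, djm,
        LDisj_symm dik, LDisj_symm djk, absurd rfl hnm, dkl, dkm,
        LDisj_symm dil, LDisj_symm djl, LDisj_symm dkl, absurd rfl hnm, dlm,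
        LDisj_symm dim', LDisj_symm djm, LDisj_symm dkm, LDisj_symm dlm, absurd rfl hnm]
    have main : ∀ n : Fin 5,
        lineMem (![i, j, (comp i j).1, (comp i j).2.1, (comp i j).2.2] n) p →
        ∃! k : Fin 5, ∃ V ∈ ![C₁, C₂, MSet (comp i j).1, MSet (comp i j).2.1,
          MSet (comp i j).2.2] k, PhaseEq (Mop p) V := by
      intro n hn
      refine ⟨n, ⟨Mop p, ?_, PhaseEq.refl' _⟩, ?_⟩
      · rw [key n]; exact ⟨p, hn, rfl⟩
      · rintro n' ⟨V, hV, hph⟩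
        rw [key n'] at hV
        obtain ⟨y, hy, rfl⟩ := hV
        have hpy : p = y := by
          by_contra hne
          exact notPhase hne hph
        subst hpy
        by_contra hne
        exact hLD n' n hne p ⟨hy, hn⟩
    rcases cov p np with h | h | h | h | h
    · exact main 0 h
    · exact main 1 h
    · exact main 2 h
    · exact main 3 h
    · exact main 4 h
end
end
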